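/- arXiv:math-ph/0503023 — 2 statements merged into one kernel-verified Lean document; each statement's English description precedes it below -/
import Mathlib

section
/- First Griffiths-type inequality on the Nishimori line: the quenched pressure P({x}) = [ln Z] is differentiable in each parameter x_b and its total derivative (taking into account the dependence of both the Gaussian mean and the potential on x_b) satisfies dP/dx_b = x_b [⟨S_b⟩ + 1], which is nonnegative; in particular P is nondecreasing in each x_b. -/
open MeasureTheory ProbabilityTheory Filter

noncomputable section

/-- The real value ±1 of a Boolean spin. -/
def spin (s : Bool) : ℝ := if s then 1 else -1

/-- The bond spin `S_b = S_n S_{n'}` for a bond `b` with endpoints `ep b = (n, n')`. -/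
def bondSpin {V ι : Type*} (ep : ι → V × V) (S : V → Bool) (b : ι) : ℝ :=
  spin (S (ep b).1) * spin (S (ep b).2)

/-- The potential `U(j, S) = Σ_b x_b j_b S_b`. -/
def potential {V ι : Type*} [Fintype ι] (ep : ι → V × V) (x j : ι → ℝ)
    (S : V → Bool) : ℝ :=
  ∑ b, x b * j b * bondSpin ep S b

/-- The partition function `Z(j) = Σ_S exp U(j,S)`. -/
def partitionFn {V ι : Type*} [Fintype V] [DecidableEq V] [Fintype ι]
    (ep : ι → V × V) (x j : ι → ℝ) : ℝ :=
  ∑ S : V → Bool, Real.exp (potential ep x j S)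

/-- The Boltzmann–Gibbs expectation `⟨f⟩` at fixed disorder `j`. -/
def gibbs {V ι : Type*} [Fintype V] [DecidableEq V] [Fintype ι]
    (ep : ι → V × V) (x j : ι → ℝ) (f : (V → Bool) → ℝ) : ℝ :=
  (∑ S : V → Bool, f S * Real.exp (potential ep x j S)) / partitionFn ep x j

/-- The law of the couplings: independent Gaussians, `j_b` of mean `x_b` and variance 1. -/
def couplings {ι : Type*} [Fintype ι] (x : ι → ℝ) : Measure (ι → ℝ) :=
  Measure.pi fun b => gaussianReal (x b) 1

/-- The quenched average `[F]`. -/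
def quenched {ι : Type*} [Fintype ι] (x : ι → ℝ) (F : (ι → ℝ) → ℝ) : ℝ :=
  ∫ j, F j ∂(couplings x)

/-- The quenched pressure `P({x}) = [ln Z]`. -/
def pressure {V ι : Type*} [Fintype V] [DecidableEq V] [Fintype ι]
    (ep : ι → V × V) (x : ι → ℝ) : ℝ :=
  quenched x fun j => Real.log (partitionFn ep x j)

/-!  ### Auxiliary development -/

set_option linter.unusedSectionVars false
set_option maxHeartbeats 1000000

open scoped NNReal ENNReal

namespace NishimoriAux

/-! #### One-dimensional Gaussian lemmas -/

/-- Cameron–Martin density -/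
def cmd (a t : ℝ) : ℝ := Real.exp (a*t - a^2/2)

lemma cmd_pos (a t : ℝ) : 0 < cmd a t := Real.exp_pos _
lemma cmd_nonneg (a t : ℝ) : 0 ≤ cmd a t := (cmd_pos a t).le
lemma continuous_cmd (a : ℝ) : Continuous (cmd a) := by
  unfold cmd; fun_prop

lemma gaussianPDFReal_mul_cmd (a t : ℝ) :
    gaussianPDFReal 0 1 t * cmd a t = gaussianPDFReal a 1 t := by
  unfold gaussianPDFReal cmd
  rw [mul_assoc, ← Real.exp_add]
  have h1 : ((1:ℝ≥0) : ℝ) = (1:ℝ) := rfl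
  rw [h1]
  congr 2
  ring

lemma gaussianPDF_mul_cmd (a t : ℝ) :
    gaussianPDF 0 1 t * ENNReal.ofReal (cmd a t) = gaussianPDF a 1 t := by
  rw [gaussianPDF, gaussianPDF, ← ENNReal.ofReal_mul (gaussianPDFReal_nonneg _ _ _),
    gaussianPDFReal_mul_cmd]

lemma cm1 (a : ℝ) :
    (gaussianReal 0 1).withDensity (fun t => ENNReal.ofReal (cmd a t)) = gaussianReal a 1 := by
  rw [gaussianReal_of_var_ne_zero 0 one_ne_zero, gaussianReal_of_var_ne_zero a one_ne_zero,
    ← withDensity_mul _ (measurable_gaussianPDF 0 1)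
      ((continuous_cmd a).measurable.ennreal_ofReal)]
  congr 1
  funext t
  exact gaussianPDF_mul_cmd a t

open Real in
lemma master (a : ℝ) :
    Integrable (fun t => (1+|t|) * Real.exp (a*|t|)) (gaussianReal 0 1) := by
  rw [gaussianReal_of_var_ne_zero 0 one_ne_zero,
    integrable_withDensity_iff (measurable_gaussianPDF 0 1)
      (ae_of_all _ fun t => ENNReal.ofReal_lt_top)]
  have hpdf : ∀ t : ℝ, (gaussianPDF 0 1 t).toReal = gaussianPDFReal 0 1 t := fun t =>
    ENNReal.toReal_ofReal (gaussianPDFReal_nonneg 0 1 t)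
  have hcont : Continuous fun t : ℝ => (1+|t|) * Real.exp (a*|t|) * (gaussianPDF 0 1 t).toReal := by
    simp only [hpdf]
    have : Continuous (gaussianPDFReal 0 1) := by
      unfold gaussianPDFReal; fun_prop
    fun_prop
  refine Integrable.mono'
    ((integrable_exp_neg_mul_sq (by norm_num : (0:ℝ) < 4⁻¹)).const_mul
      (2 * Real.exp ((|a|+1)^2) * (Real.sqrt (2*π))⁻¹)) hcont.aestronglyMeasurable
    (ae_of_all _ fun t => ?_)
  rw [norm_eq_abs, hpdf]
  have h0 : (0:ℝ) ≤ (1+|t|) * Real.exp (a*|t|) * gaussianPDFReal 0 1 t := by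
    have := gaussianPDFReal_nonneg 0 1 t
    positivity
  rw [abs_of_nonneg h0]
  unfold gaussianPDFReal
  simp only [NNReal.coe_one, mul_one]
  have hsqrt : (0:ℝ) ≤ (Real.sqrt (2*π))⁻¹ := by positivity
  have key : (1+|t|) * Real.exp (a*|t|) * Real.exp (-(t-0)^2/2)
      ≤ 2 * Real.exp ((|a|+1)^2) * Real.exp (-4⁻¹*t^2) := by
    have e1 : (1:ℝ)+|t| ≤ 2 * Real.exp |t| := by
      have := Real.add_one_le_exp |t|
      have h2 : Real.exp |t| ≤ 2 * Real.exp |t| := by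
        nlinarith [Real.exp_pos |t|]
      linarith
    have e2 : Real.exp (a*|t|) ≤ Real.exp (|a| * |t|) := by
      apply Real.exp_le_exp.mpr
      have ha := le_abs_self a
      nlinarith [abs_nonneg t]
    calc (1+|t|) * Real.exp (a*|t|) * Real.exp (-(t-0)^2/2)
        ≤ (2 * Real.exp |t|) * Real.exp (|a| * |t|) * Real.exp (-(t-0)^2/2) := by
          have hpos : (0:ℝ) < Real.exp (-(t-0)^2/2) := Real.exp_pos _
          have h1t : (0:ℝ) ≤ 1 + |t| := by positivity
          have := mul_le_mul e1 e2 (Real.exp_pos _).le (by positivity)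
          nlinarith [Real.exp_pos (-(t-0)^2/2)]
      _ = 2 * (Real.exp |t| * Real.exp (|a| * |t|) * Real.exp (-(t-0)^2/2)) := by ring
      _ = 2 * Real.exp (|t| + |a| * |t| + -(t-0)^2/2) := by
          rw [← Real.exp_add, ← Real.exp_add]
      _ ≤ 2 * Real.exp ((|a|+1)^2 + -4⁻¹*t^2) := by
          have : |t| + |a| * |t| + -(t-0)^2/2 ≤ (|a|+1)^2 + -4⁻¹*t^2 := by
            nlinarith [sq_nonneg (|t|/2 - (|a|+1)), sq_abs t, abs_nonneg t, abs_nonneg a]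
          have := Real.exp_le_exp.mpr this
          linarith
      _ = 2 * (Real.exp ((|a|+1)^2) * Real.exp (-4⁻¹*t^2)) := by
          rw [← Real.exp_add]
      _ = 2 * Real.exp ((|a|+1)^2) * Real.exp (-4⁻¹*t^2) := by ring
  calc (1+|t|) * Real.exp (a*|t|) * ((Real.sqrt (2*π))⁻¹ * Real.exp (-(t-0)^2/2))
      = (Real.sqrt (2*π))⁻¹ * ((1+|t|) * Real.exp (a*|t|) * Real.exp (-(t-0)^2/2)) := by ring
    _ ≤ (Real.sqrt (2*π))⁻¹ * (2 * Real.exp ((|a|+1)^2) * Real.exp (-4⁻¹*t^2)) :=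
        mul_le_mul_of_nonneg_left key hsqrt
    _ = 2 * Real.exp ((|a|+1)^2) * (Real.sqrt (2*π))⁻¹ * Real.exp (-4⁻¹*t^2) := by ring

lemma integrable_of_le_master {f : ℝ → ℝ} (a : ℝ)
    (hm : AEStronglyMeasurable f (gaussianReal 0 1))
    (h : ∀ t, |f t| ≤ (1+|t|) * Real.exp (a*|t|)) : Integrable f (gaussianReal 0 1) :=
  (master a).mono' hm (ae_of_all _ fun t => by rw [Real.norm_eq_abs]; exact h t)

lemma int_exp (a : ℝ) : Integrable (fun t => Real.exp (a*t)) (gaussianReal 0 1) := by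
  refine integrable_of_le_master |a|
    ((by fun_prop : Continuous fun t : ℝ => Real.exp (a*t)).aestronglyMeasurable) fun t => ?_
  rw [abs_of_nonneg (Real.exp_pos _).le]
  have h1 : a*t ≤ |a| * |t| := by
    have := le_abs_self (a*t); rwa [abs_mul] at this
  have h2 : Real.exp (a*t) ≤ Real.exp (|a| * |t|) := Real.exp_le_exp.mpr h1
  nlinarith [Real.exp_pos (|a| * |t|), abs_nonneg t]

lemma int_id_exp (a : ℝ) : Integrable (fun t => t * Real.exp (a*t)) (gaussianReal 0 1) := by
  refine integrable_of_le_master |a|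
    ((by fun_prop : Continuous fun t : ℝ => t * Real.exp (a*t)).aestronglyMeasurable) fun t => ?_
  rw [abs_mul, abs_of_nonneg (Real.exp_pos _).le]
  have h1 : a*t ≤ |a| * |t| := by
    have := le_abs_self (a*t); rwa [abs_mul] at this
  have h2 : Real.exp (a*t) ≤ Real.exp (|a| * |t|) := Real.exp_le_exp.mpr h1
  nlinarith [Real.exp_pos (|a| * |t|), abs_nonneg t, Real.exp_pos (a*t)]

lemma cmd_eq (a t : ℝ) : cmd a t = Real.exp (a*t) * Real.exp (-(a^2/2)) := by
  rw [cmd, ← Real.exp_add]; ring_nf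

lemma int_cmd (a : ℝ) : Integrable (cmd a) (gaussianReal 0 1) := by
  have h : cmd a = fun t => Real.exp (a*t) * Real.exp (-(a^2/2)) := funext fun t => cmd_eq a t
  rw [h]; exact (int_exp a).mul_const _

lemma int_id_cmd (a : ℝ) : Integrable (fun t => t * cmd a t) (gaussianReal 0 1) := by
  have h : (fun t => t * cmd a t) = fun t => (t * Real.exp (a*t)) * Real.exp (-(a^2/2)) :=
    funext fun t => by rw [cmd_eq]; ring
  rw [h]; exact (int_id_exp a).mul_const _

lemma int_abs : Integrable (fun t : ℝ => |t|) (gaussianReal 0 1) := by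
  refine integrable_of_le_master 0
    ((by fun_prop : Continuous fun t : ℝ => |t|).aestronglyMeasurable) fun t => ?_
  rw [abs_abs, zero_mul, Real.exp_zero, mul_one]
  linarith [abs_nonneg t]

lemma int_id : Integrable (fun t : ℝ => t) (gaussianReal 0 1) :=
  int_abs.mono' aestronglyMeasurable_id (ae_of_all _ fun t => by simp)

lemma m_cmd (a : ℝ) : ∫ t, cmd a t ∂(gaussianReal 0 1) = 1 := by
  have h1 : ((gaussianReal 0 1).withDensity (fun t => ENNReal.ofReal (cmd a t))) Set.univ = 1 := by
    rw [cm1]; exact measure_univ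
  rw [withDensity_apply _ MeasurableSet.univ, Measure.restrict_univ,
    ← ofReal_integral_eq_lintegral_ofReal (int_cmd a) (ae_of_all _ fun t => cmd_nonneg a t)] at h1
  rwa [ENNReal.ofReal_eq_one] at h1

lemma map_neg_gauss : (gaussianReal 0 1).map (fun t => (-1 : ℝ) * t) = gaussianReal 0 1 := by
  rw [gaussianReal_map_const_mul (-1)]
  have h1 : (⟨(-1:ℝ)^2, sq_nonneg _⟩ : ℝ≥0) = 1 := by ext; norm_num
  rw [mul_zero]; congr 1; ext; simp

lemma mzero : ∫ t, t ∂(gaussianReal 0 1) = 0 := by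
  have h : ∫ t, t ∂(gaussianReal 0 1) = ∫ t, (-1 : ℝ) * t ∂(gaussianReal 0 1) := by
    nth_rewrite 1 [← map_neg_gauss]
    exact integral_map (φ := fun t => (-1:ℝ)*t) (by fun_prop) (f := fun t => t)
      aestronglyMeasurable_id
  rw [integral_const_mul] at h
  linarith

lemma m_id_gauss (a : ℝ) : ∫ t, t ∂(gaussianReal a 1) = a := by
  have h : (gaussianReal 0 1).map (· + a) = gaussianReal a 1 := by
    rw [gaussianReal_map_add_const a, zero_add]
  rw [← h, integral_map (φ := fun x => x + a) (by fun_prop) (f := fun t => t)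
    aestronglyMeasurable_id]
  rw [integral_add int_id (integrable_const a), mzero, integral_const]
  simp

lemma m_id_cmd (a : ℝ) : ∫ t, t * cmd a t ∂(gaussianReal 0 1) = a := by
  have h := m_id_gauss a
  rw [← cm1 a] at h
  have hd : (fun t => ENNReal.ofReal (cmd a t))
      = (fun t => ((Real.toNNReal (cmd a t) : ℝ≥0) : ℝ≥0∞)) := rfl
  rw [hd, integral_withDensity_eq_integral_smul
    ((continuous_cmd a).measurable.real_toNNReal)] at h
  nth_rewrite 2 [← h]
  refine integral_congr_ae (ae_of_all _ fun t => ?_)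
  show t * cmd a t = (cmd a t).toNNReal • t
  rw [NNReal.smul_def, smul_eq_mul, Real.coe_toNNReal _ (cmd_nonneg a t), mul_comm]

lemma exp_eq_cmd (a t : ℝ) : Real.exp (a*t) = Real.exp (a^2/2) * cmd a t := by
  rw [cmd, ← Real.exp_add]; congr 1; ring

lemma m_exp (a : ℝ) : ∫ t, Real.exp (a*t) ∂(gaussianReal 0 1) = Real.exp (a^2/2) := by
  simp only [exp_eq_cmd]
  rw [integral_const_mul, m_cmd, mul_one]

lemma m_id_exp (a : ℝ) :
    ∫ t, t * Real.exp (a*t) ∂(gaussianReal 0 1) = a * Real.exp (a^2/2) := by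
  have h : ∀ t, t * Real.exp (a*t) = Real.exp (a^2/2) * (t * cmd a t) := fun t => by
    rw [exp_eq_cmd]; ring
  simp only [h]
  rw [integral_const_mul, m_id_cmd, mul_comm]

/-! #### Spin algebra -/

section SpinAlgebra
variable {V ι : Type*} [Fintype V] [DecidableEq V] [Fintype ι]

lemma spin_mul_self (s : Bool) : spin s * spin s = 1 := by cases s <;> norm_num [spin]

lemma abs_spin (s : Bool) : |spin s| = 1 := by cases s <;> norm_num [spin]

/-- pointwise product of spin configurations -/
def cfgMul (τ S : V → Bool) : V → Bool := fun n => τ n == S n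

lemma spin_beq (a c : Bool) : spin (a == c) = spin a * spin c := by
  cases a <;> cases c <;> norm_num [spin]

lemma cfgMul_invol (τ S : V → Bool) : cfgMul τ (cfgMul τ S) = S := by
  funext n
  cases hτ : τ n <;> cases hS : S n <;> simp [cfgMul, hτ, hS]

lemma bondSpin_cfgMul (ep : ι → V × V) (τ S : V → Bool) (c : ι) :
    bondSpin ep (cfgMul τ S) c = bondSpin ep τ c * bondSpin ep S c := by
  unfold bondSpin cfgMul
  rw [spin_beq, spin_beq]
  ring

lemma bondSpin_mul_self (ep : ι → V × V) (τ : V → Bool) (c : ι) :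
    bondSpin ep τ c * bondSpin ep τ c = 1 := by
  unfold bondSpin
  have h1 := spin_mul_self (τ (ep c).1)
  have h2 := spin_mul_self (τ (ep c).2)
  nlinarith

lemma bondSpin_sq (ep : ι → V × V) (τ : V → Bool) (c : ι) :
    (bondSpin ep τ c)^2 = 1 := by
  rw [sq]; exact bondSpin_mul_self ep τ c

lemma abs_bondSpin (ep : ι → V × V) (S : V → Bool) (c : ι) : |bondSpin ep S c| = 1 := by
  rw [bondSpin, abs_mul, abs_spin, abs_spin, mul_one]

/-- the gauge equivalence -/
def cfgEquiv (τ : V → Bool) : (V → Bool) ≃ (V → Bool) :=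
  ⟨cfgMul τ, cfgMul τ, cfgMul_invol τ, cfgMul_invol τ⟩

lemma partitionFn_pos (ep : ι → V × V) (x j : ι → ℝ) : 0 < partitionFn ep x j :=
  Finset.sum_pos (fun S _ => Real.exp_pos _) ⟨fun _ => true, Finset.mem_univ _⟩

lemma partitionFn_ne (ep : ι → V × V) (x j : ι → ℝ) : partitionFn ep x j ≠ 0 :=
  (partitionFn_pos ep x j).ne'

lemma abs_gibbs_le (ep : ι → V × V) (x j : ι → ℝ) {f : (V → Bool) → ℝ} {C : ℝ}
    (hf : ∀ S, |f S| ≤ C) : |gibbs ep x j f| ≤ C := by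
  have hZ := partitionFn_pos ep x j
  rw [gibbs, abs_div, abs_of_pos hZ, div_le_iff₀ hZ]
  calc |∑ S : V → Bool, f S * Real.exp (potential ep x j S)|
      ≤ ∑ S : V → Bool, |f S * Real.exp (potential ep x j S)| := Finset.abs_sum_le_sum_abs _ _
    _ ≤ ∑ S : V → Bool, C * Real.exp (potential ep x j S) := by
        refine Finset.sum_le_sum fun S _ => ?_
        rw [abs_mul, abs_of_pos (Real.exp_pos _)]
        exact mul_le_mul_of_nonneg_right (hf S) (Real.exp_pos _).le
    _ = C * partitionFn ep x j := by rw [partitionFn, ← Finset.mul_sum]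

lemma gibbs_nonneg (ep : ι → V × V) (x j : ι → ℝ) {f : (V → Bool) → ℝ}
    (hf : ∀ S, 0 ≤ f S) : 0 ≤ gibbs ep x j f :=
  div_nonneg (Finset.sum_nonneg fun S _ => mul_nonneg (hf S) (Real.exp_pos _).le)
    (partitionFn_pos ep x j).le

lemma gibbs_add_one (ep : ι → V × V) (x j : ι → ℝ) (f : (V → Bool) → ℝ) :
    gibbs ep x j (fun S => f S + 1) = gibbs ep x j f + 1 := by
  have hZ := partitionFn_ne ep x j
  have h : ∑ S : V → Bool, (f S + 1) * Real.exp (potential ep x j S)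
      = (∑ S : V → Bool, f S * Real.exp (potential ep x j S)) + partitionFn ep x j := by
    rw [partitionFn, ← Finset.sum_add_distrib]
    exact Finset.sum_congr rfl fun S _ => by ring
  rw [gibbs, gibbs, h, add_div, div_self hZ]

lemma continuous_potential (ep : ι → V × V) (x : ι → ℝ) (S : V → Bool) :
    Continuous fun j : ι → ℝ => potential ep x j S := by
  unfold potential
  exact continuous_finset_sum _ fun c _ =>
    ((continuous_const.mul (continuous_apply c)).mul continuous_const)

lemma continuous_partitionFn (ep : ι → V × V) (x : ι → ℝ) :
    Continuous fun j : ι → ℝ => partitionFn ep x j :=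
  continuous_finset_sum _ fun S _ => Real.continuous_exp.comp (continuous_potential ep x S)

lemma continuous_gibbs (ep : ι → V × V) (x : ι → ℝ) (f : (V → Bool) → ℝ) :
    Continuous fun j : ι → ℝ => gibbs ep x j f := by
  unfold gibbs
  exact (continuous_finset_sum _ fun S _ =>
    (continuous_const.mul (Real.continuous_exp.comp (continuous_potential ep x S)))).div
    (continuous_partitionFn ep x) fun j => partitionFn_ne ep x j

lemma continuous_log_partitionFn (ep : ι → V × V) (x : ι → ℝ) :
    Continuous fun j : ι → ℝ => Real.log (partitionFn ep x j) :=
  (continuous_partitionFn ep x).log fun j => partitionFn_ne ep x j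

lemma abs_log_partitionFn_le (ep : ι → V × V) (x j : ι → ℝ) :
    |Real.log (partitionFn ep x j)|
      ≤ Fintype.card V * Real.log 2 + ∑ c, |x c * j c| := by
  set M := ∑ c, |x c * j c| with hM
  have hZ := partitionFn_pos ep x j
  have habs : ∀ S : V → Bool, |potential ep x j S| ≤ M := by
    intro S
    calc |potential ep x j S| ≤ ∑ c, |x c * j c * bondSpin ep S c| :=
          Finset.abs_sum_le_sum_abs _ _
      _ = M := by
          rw [hM]
          exact Finset.sum_congr rfl fun c _ => by
            rw [abs_mul, abs_bondSpin, mul_one]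
  have hub : partitionFn ep x j ≤ (Fintype.card (V → Bool) : ℝ) * Real.exp M := by
    rw [partitionFn]
    calc ∑ S : V → Bool, Real.exp (potential ep x j S)
        ≤ ∑ _S : V → Bool, Real.exp M := Finset.sum_le_sum fun S _ =>
          Real.exp_le_exp.mpr ((le_abs_self _).trans (habs S))
      _ = (Fintype.card (V → Bool) : ℝ) * Real.exp M := by
          rw [Finset.sum_const, nsmul_eq_mul, Finset.card_univ]
  have hlb : Real.exp (-M) ≤ partitionFn ep x j := by
    calc Real.exp (-M) ≤ Real.exp (potential ep x j (fun _ => true)) := by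
          apply Real.exp_le_exp.mpr
          have := habs (fun _ => true)
          rw [abs_le] at this
          linarith [this.1]
      _ ≤ partitionFn ep x j :=
          Finset.single_le_sum (fun S _ => (Real.exp_pos _).le) (Finset.mem_univ _)
  have hcard : (Fintype.card (V → Bool) : ℝ) = 2 ^ Fintype.card V := by
    rw [Fintype.card_fun, Fintype.card_bool]
    push_cast
    ring
  have hlog2 : (0:ℝ) ≤ Fintype.card V * Real.log 2 :=
    mul_nonneg (Nat.cast_nonneg _) (Real.log_nonneg one_le_two)
  rw [abs_le]
  constructor
  · have h1 : -M ≤ Real.log (partitionFn ep x j) :=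
      (Real.le_log_iff_exp_le hZ).mpr hlb
    linarith
  · have h2 : Real.log (partitionFn ep x j)
        ≤ Real.log ((Fintype.card (V → Bool) : ℝ) * Real.exp M) :=
      Real.log_le_log hZ hub
    rw [Real.log_mul (by positivity) (Real.exp_ne_zero _), Real.log_exp, hcard,
      Real.log_pow] at h2
    simpa using h2

end SpinAlgebra

/-! #### Product Gaussian measures -/

/-- Type synonym of `ℝ` carrying the standard Gaussian as volume. -/
def StdG : Type := ℝ

instance : MeasurableSpace StdG := inferInstanceAs (MeasurableSpace ℝ)
instance : MeasureSpace StdG := ⟨gaussianReal 0 1⟩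
instance : IsProbabilityMeasure (volume : Measure StdG) :=
  inferInstanceAs (IsProbabilityMeasure (gaussianReal 0 1))
instance : SigmaFinite (volume : Measure StdG) :=
  inferInstanceAs (SigmaFinite (gaussianReal 0 1))

variable {ι : Type*} [Fintype ι]

/-- the standard Gaussian product measure -/
def nu (ι : Type*) [Fintype ι] : Measure (ι → ℝ) := Measure.pi fun _ => gaussianReal 0 1

instance : IsProbabilityMeasure (nu ι) := by
  unfold nu; infer_instance

instance (x : ι → ℝ) : IsProbabilityMeasure (couplings x) := by
  unfold couplings; infer_instance

lemma nu_eq_volume : nu ι = (volume : Measure (ι → StdG)) := rfl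

lemma integral_nu_prod (f : ι → ℝ → ℝ) :
    ∫ g, ∏ c, f c (g c) ∂(nu ι) = ∏ c, ∫ t, f c t ∂(gaussianReal 0 1) :=
  MeasureTheory.integral_fintype_prod_eq_prod (𝕜 := ℝ) (fun c (t : ℝ) => f c t)
    (μ := fun _ => gaussianReal 0 1)

lemma integrable_nu_prod (f : ι → ℝ → ℝ) (h : ∀ c, Integrable (f c) (gaussianReal 0 1)) :
    Integrable (fun g : ι → ℝ => ∏ c, f c (g c)) (nu ι) :=
  MeasureTheory.Integrable.fintype_prod (f := f) (μ := fun _ => gaussianReal 0 1) h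

lemma pi_map_coord (μ κ : ι → Measure ℝ) [∀ c, IsProbabilityMeasure (μ c)]
    [∀ c, IsProbabilityMeasure (κ c)] {f : ι → ℝ → ℝ} (hf : ∀ c, Measurable (f c))
    (h : ∀ c, (μ c).map (f c) = κ c) :
    (Measure.pi μ).map (fun g c => f c (g c)) = Measure.pi κ := by
  have hmeas : Measurable fun (g : ι → ℝ) c => f c (g c) :=
    measurable_pi_lambda _ fun c => (hf c).comp (measurable_pi_apply c)
  haveI : ∀ c, SigmaFinite (κ c) := fun c => inferInstance
  refine (Measure.pi_eq fun s hs => ?_).symm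
  rw [Measure.map_apply hmeas (MeasurableSet.univ_pi hs)]
  have hpre : (fun (g : ι → ℝ) c => f c (g c)) ⁻¹' Set.pi Set.univ s
      = Set.pi Set.univ fun c => f c ⁻¹' s c := by
    ext g
    simp [Set.mem_pi]
  rw [hpre, Measure.pi_pi]
  exact Finset.prod_congr rfl fun c _ => by
    rw [← h c, Measure.map_apply (hf c) (hs c)]

lemma nu_map_shift (y : ι → ℝ) :
    (nu ι).map (fun g c => g c + y c) = couplings y := by
  refine pi_map_coord _ _ (f := fun c t => t + y c)
    (fun c => measurable_add_const (y c)) fun c => ?_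
  rw [gaussianReal_map_add_const (y c), zero_add]

lemma nu_map_flip {ε : ι → ℝ} (hε : ∀ c, ε c * ε c = 1) :
    (nu ι).map (fun g c => ε c * g c) = nu ι := by
  refine pi_map_coord _ _ (f := fun c t => ε c * t)
    (fun c => measurable_const_mul (ε c)) fun c => ?_
  rw [gaussianReal_map_const_mul (ε c), mul_zero]
  congr 1
  ext
  simp [sq]
  exact hε c

lemma integral_couplings (y : ι → ℝ) {F : (ι → ℝ) → ℝ}
    (hF : AEStronglyMeasurable F (couplings y)) :
    ∫ j, F j ∂(couplings y) = ∫ g, F (fun c => g c + y c) ∂(nu ι) := by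
  rw [← nu_map_shift y, integral_map]
  · exact (measurable_pi_lambda _ fun c =>
      (measurable_pi_apply c).add_const (y c)).aemeasurable
  · rwa [nu_map_shift]

lemma integral_flip {ε : ι → ℝ} (hε : ∀ c, ε c * ε c = 1) {F : (ι → ℝ) → ℝ}
    (hF : AEStronglyMeasurable F (nu ι)) :
    ∫ j, F j ∂(nu ι) = ∫ g, F (fun c => ε c * g c) ∂(nu ι) := by
  nth_rewrite 1 [← nu_map_flip hε]
  rw [integral_map]
  · exact (measurable_pi_lambda _ fun c =>
      (measurable_pi_apply c).const_mul (ε c)).aemeasurable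
  · rwa [nu_map_flip hε]

lemma couplings_withDensity (y : ι → ℝ) :
    couplings y = (nu ι).withDensity (fun j => ENNReal.ofReal (∏ c, cmd (y c) (j c))) := by
  haveI : ∀ c : ι, SigmaFinite (gaussianReal (y c) 1) := fun c => inferInstance
  refine (Measure.pi_eq fun s hs => ?_)
  have hD : Measurable fun j : ι → ℝ => ENNReal.ofReal (∏ c, cmd (y c) (j c)) := by
    apply Measurable.ennreal_ofReal
    exact Finset.measurable_prod _ fun c _ =>
      ((continuous_cmd (y c)).measurable).comp (measurable_pi_apply c)
  rw [withDensity_apply _ (MeasurableSet.univ_pi hs),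
    ← lintegral_indicator (MeasurableSet.univ_pi hs)]
  have hpoint : ∀ j : ι → ℝ,
      (Set.pi Set.univ s).indicator (fun j => ENNReal.ofReal (∏ c, cmd (y c) (j c))) j
      = ∏ c, ENNReal.ofReal ((s c).indicator (cmd (y c)) (j c)) := by
    intro j
    by_cases hj : j ∈ Set.pi Set.univ s
    · rw [Set.indicator_of_mem hj]
      have hmem : ∀ c, (s c).indicator (cmd (y c)) (j c) = cmd (y c) (j c) := fun c =>
        Set.indicator_of_mem (Set.mem_univ_pi.mp hj c) _
      simp_rw [hmem]
      rw [← ENNReal.ofReal_prod_of_nonneg (fun c _ => cmd_nonneg (y c) (j c))]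
    · rw [Set.indicator_of_notMem hj]
      rw [Set.mem_univ_pi] at hj
      push_neg at hj
      obtain ⟨c0, hc0⟩ := hj
      rw [eq_comm]
      refine Finset.prod_eq_zero (Finset.mem_univ c0) ?_
      rw [Set.indicator_of_notMem hc0, ENNReal.ofReal_zero]
  simp_rw [hpoint]
  have hint : ∀ c : ι, Integrable ((s c).indicator (cmd (y c))) (gaussianReal 0 1) :=
    fun c => (int_cmd (y c)).indicator (hs c)
  have hnn : ∀ (c : ι) (t : ℝ), 0 ≤ (s c).indicator (cmd (y c)) t :=
    fun c t => Set.indicator_nonneg (fun t _ => cmd_nonneg (y c) t) t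
  have step : ∫⁻ j, ∏ c, ENNReal.ofReal ((s c).indicator (cmd (y c)) (j c)) ∂(nu ι)
      = ENNReal.ofReal (∫ j, ∏ c, (s c).indicator (cmd (y c)) (j c) ∂(nu ι)) := by
    rw [ofReal_integral_eq_lintegral_ofReal
      (integrable_nu_prod _ hint)
      (ae_of_all _ fun j => Finset.prod_nonneg fun c _ => hnn c (j c))]
    refine lintegral_congr fun j => ?_
    rw [ENNReal.ofReal_prod_of_nonneg (fun c _ => hnn c (j c))]
  rw [step, integral_nu_prod,
    ENNReal.ofReal_prod_of_nonneg (fun c _ => integral_nonneg (fun t => hnn c t))]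
  refine Finset.prod_congr rfl fun c _ => ?_
  rw [← cm1 (y c), withDensity_apply _ (hs c), ← lintegral_indicator (hs c)]
  have hsw : (s c).indicator (fun t => ENNReal.ofReal (cmd (y c) t))
      = fun t => ENNReal.ofReal ((s c).indicator (cmd (y c)) t) := by
    funext t; by_cases ht : t ∈ s c <;> simp [ht]
  rw [hsw, ← ofReal_integral_eq_lintegral_ofReal (hint c) (ae_of_all _ (hnn c))]

lemma measurable_cmd_prod (y : ι → ℝ) :
    Measurable fun j : ι → ℝ => ∏ c, cmd (y c) (j c) :=
  Finset.measurable_prod _ fun c _ =>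
    ((continuous_cmd (y c)).measurable).comp (measurable_pi_apply c)

lemma integral_couplings_density (y : ι → ℝ) (F : (ι → ℝ) → ℝ) :
    ∫ j, F j ∂(couplings y) = ∫ j, (∏ c, cmd (y c) (j c)) * F j ∂(nu ι) := by
  rw [couplings_withDensity y]
  have hd : (fun j : ι → ℝ => ENNReal.ofReal (∏ c, cmd (y c) (j c)))
      = fun j => ((Real.toNNReal (∏ c, cmd (y c) (j c)) : ℝ≥0) : ℝ≥0∞) := rfl
  rw [hd, integral_withDensity_eq_integral_smul ((measurable_cmd_prod y).real_toNNReal)]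
  refine integral_congr_ae (ae_of_all _ fun j => ?_)
  show (Real.toNNReal (∏ c, cmd (y c) (j c))) • F j = _
  rw [NNReal.smul_def, smul_eq_mul,
    Real.coe_toNNReal _ (Finset.prod_nonneg fun c _ => cmd_nonneg _ _)]

lemma int_abs_eval [DecidableEq ι] (b : ι) :
    Integrable (fun g : ι → ℝ => |g b|) (nu ι) := by
  have hint : Integrable (fun g : ι → ℝ =>
      ∏ c, (fun t : ℝ => if c = b then |t| else 1) (g c)) (nu ι) := by
    refine integrable_nu_prod (fun c (t : ℝ) => if c = b then |t| else 1) fun c => ?_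
    by_cases hc : c = b
    · simpa [hc] using int_abs
    · simp only [hc, if_false]
      exact integrable_const 1
  refine hint.congr (ae_of_all _ fun g => ?_)
  simp only
  rw [Finset.prod_ite_eq' Finset.univ b (fun c => |g c|)]
  simp

/-! #### The key Nishimori gauge identity -/

section Key
variable {V ι : Type*} [Fintype V] [DecidableEq V] [Fintype ι] [DecidableEq ι]
variable (ep : ι → V × V) (x : ι → ℝ) (b : ι)

lemma potential_flip (τ : V → Bool) (j : ι → ℝ) (S : V → Bool) :
    potential ep x (fun c => bondSpin ep τ c * j c) S = potential ep x j (cfgMul τ S) := by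
  unfold potential
  refine Finset.sum_congr rfl fun c _ => ?_
  rw [bondSpin_cfgMul]
  ring

lemma partitionFn_flip (τ : V → Bool) (j : ι → ℝ) :
    partitionFn ep x (fun c => bondSpin ep τ c * j c) = partitionFn ep x j := by
  rw [partitionFn, partitionFn]
  simp_rw [potential_flip]
  exact Fintype.sum_bijective (cfgMul τ) (Function.Involutive.bijective (cfgMul_invol τ))
    _ _ (fun S => rfl)

/-- the numerator of `⟨S_b⟩` -/
def numer (j : ι → ℝ) : ℝ := ∑ S : V → Bool, bondSpin ep S b * Real.exp (potential ep x j S)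

lemma gibbs_bond_eq (j : ι → ℝ) :
    gibbs ep x j (fun S => bondSpin ep S b) = numer ep x b j / partitionFn ep x j := rfl

lemma numer_flip (τ : V → Bool) (j : ι → ℝ) :
    numer ep x b (fun c => bondSpin ep τ c * j c) = bondSpin ep τ b * numer ep x b j := by
  rw [numer, numer, Finset.mul_sum]
  simp_rw [potential_flip]
  calc ∑ S : V → Bool, bondSpin ep S b * Real.exp (potential ep x j (cfgMul τ S))
      = ∑ S : V → Bool, bondSpin ep τ b *
          (bondSpin ep (cfgMul τ S) b * Real.exp (potential ep x j (cfgMul τ S))) := by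
        refine Finset.sum_congr rfl fun S _ => ?_
        rw [bondSpin_cfgMul]
        have h := bondSpin_mul_self ep τ b
        linear_combination (-(bondSpin ep S b * Real.exp (potential ep x j (cfgMul τ S)))) * h
    _ = ∑ S : V → Bool, bondSpin ep τ b *
          (bondSpin ep S b * Real.exp (potential ep x j S)) :=
        Fintype.sum_bijective (cfgMul τ) (Function.Involutive.bijective (cfgMul_invol τ))
          _ _ (fun S => rfl)

lemma gibbs_flip (τ : V → Bool) (j : ι → ℝ) :
    gibbs ep x (fun c => bondSpin ep τ c * j c) (fun S => bondSpin ep S b)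
      = bondSpin ep τ b * gibbs ep x j (fun S => bondSpin ep S b) := by
  rw [gibbs_bond_eq, gibbs_bond_eq, numer_flip, partitionFn_flip, mul_div_assoc]

lemma cmd_flip {e : ℝ} (he : e * e = 1) (a t : ℝ) : cmd a (e * t) = cmd (e * a) t := by
  rw [cmd, cmd]
  congr 1
  have h : (e*a)^2 = a^2 := by nlinarith
  rw [h]
  ring

lemma sum_cmd_tau (j : ι → ℝ) :
    ∑ τ : V → Bool, ∏ c, cmd (bondSpin ep τ c * x c) (j c)
      = Real.exp (-(∑ c, (x c)^2/2)) * partitionFn ep x j := by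
  have hτ : ∀ τ : V → Bool, ∏ c, cmd (bondSpin ep τ c * x c) (j c)
      = Real.exp (-(∑ c, (x c)^2/2)) * Real.exp (potential ep x j τ) := by
    intro τ
    rw [← Real.exp_add]
    unfold cmd
    rw [← Real.exp_sum]
    congr 1
    have hterm : ∀ c : ι, bondSpin ep τ c * x c * j c - (bondSpin ep τ c * x c)^2/2
        = x c * j c * bondSpin ep τ c - (x c)^2/2 := by
      intro c
      have h := bondSpin_sq ep τ c
      rw [mul_pow, h, one_mul]
      ring
    simp_rw [hterm]
    rw [Finset.sum_sub_distrib, potential]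
    ring
  simp_rw [hτ]
  rw [← Finset.mul_sum, partitionFn]

lemma measurable_bond_integrand (y : ι → ℝ) :
    AEStronglyMeasurable (fun j : ι → ℝ =>
      (∏ c, cmd (y c) (j c)) * (j b * gibbs ep x j (fun S => bondSpin ep S b))) (nu ι) := by
  refine Continuous.aestronglyMeasurable ?_
  refine Continuous.mul ?_ (Continuous.mul (continuous_apply b) (continuous_gibbs ep x _))
  exact continuous_finset_prod _ fun c _ =>
    (continuous_cmd (y c)).comp (continuous_apply c)

lemma integrable_bond_integrand (y : ι → ℝ) :
    Integrable (fun j : ι → ℝ =>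
      (∏ c, cmd (y c) (j c)) * (j b * gibbs ep x j (fun S => bondSpin ep S b))) (nu ι) := by
  have hbint : Integrable (fun j : ι → ℝ => (∏ c, cmd (y c) (j c)) * |j b|) (nu ι) := by
    have h := integrable_nu_prod
      (fun c (t : ℝ) => cmd (y c) t * (if c = b then |t| else 1)) (fun c => ?_)
    · refine h.congr (ae_of_all _ fun j => ?_)
      simp only
      rw [Finset.prod_mul_distrib, Finset.prod_ite_eq' Finset.univ b (fun c => |j c|)]
      simp
    · by_cases hc : c = b
      · subst hc
        refine ((int_id_cmd (y c)).abs).congr (ae_of_all _ fun t => ?_)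
        show |t * cmd (y c) t| = cmd (y c) t * (if c = c then |t| else 1)
        rw [if_pos rfl, abs_mul, abs_of_nonneg (cmd_nonneg _ _)]
        ring
      · simp only [hc, if_false, mul_one]
        exact int_cmd (y c)
  refine hbint.mono' (measurable_bond_integrand ep x b y) (ae_of_all _ fun j => ?_)
  rw [Real.norm_eq_abs, abs_mul, abs_mul]
  have h1 : |gibbs ep x j fun S => bondSpin ep S b| ≤ 1 :=
    abs_gibbs_le ep x j fun S => le_of_eq (abs_bondSpin ep S b)
  have h2 : (0:ℝ) ≤ ∏ c, cmd (y c) (j c) := Finset.prod_nonneg fun c _ => cmd_nonneg _ _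
  rw [abs_of_nonneg h2]
  calc (∏ c, cmd (y c) (j c)) * (|j b| * |gibbs ep x j fun S => bondSpin ep S b|)
      ≤ (∏ c, cmd (y c) (j c)) * (|j b| * 1) :=
        mul_le_mul_of_nonneg_left (mul_le_mul_of_nonneg_left h1 (abs_nonneg _)) h2
    _ = (∏ c, cmd (y c) (j c)) * |j b| := by ring

lemma prod_eval_eq (S : V → Bool) (j : ι → ℝ) :
    (∏ c, (fun t : ℝ => (if c = b then t else 1) * Real.exp ((x c * bondSpin ep S c) * t)) (j c))
      = j b * Real.exp (potential ep x j S) := by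
  simp only
  rw [Finset.prod_mul_distrib, Finset.prod_ite_eq' Finset.univ b (fun c => j c)]
  simp only [Finset.mem_univ, if_true]
  congr 1
  rw [← Real.exp_sum]
  congr 1
  exact Finset.sum_congr rfl fun c _ => by ring

lemma integrable_eval_exp (S : V → Bool) :
    Integrable (fun j : ι → ℝ => j b * Real.exp (potential ep x j S)) (nu ι) := by
  have h := integrable_nu_prod
    (fun c (t : ℝ) => (if c = b then t else 1) * Real.exp ((x c * bondSpin ep S c) * t))
    (fun c => ?_)
  · exact h.congr (ae_of_all _ fun j => prod_eval_eq ep x b S j)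
  · by_cases hc : c = b
    · simpa [hc] using int_id_exp (x c * bondSpin ep S c)
    · simpa [hc] using int_exp (x c * bondSpin ep S c)

lemma integral_eval_exp (S : V → Bool) :
    ∫ j, j b * Real.exp (potential ep x j S) ∂(nu ι)
      = (x b * bondSpin ep S b) * Real.exp (∑ c, (x c)^2/2) := by
  have h : ∫ j, j b * Real.exp (potential ep x j S) ∂(nu ι)
      = ∏ c, ∫ t, (if c = b then t else 1) * Real.exp ((x c * bondSpin ep S c) * t)
          ∂(gaussianReal 0 1) := by
    rw [← integral_nu_prod]
    exact integral_congr_ae (ae_of_all _ fun j => (prod_eval_eq ep x b S j).symm)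
  rw [h]
  have hval : ∀ c : ι, ∫ t, (if c = b then t else 1) * Real.exp ((x c * bondSpin ep S c) * t)
      ∂(gaussianReal 0 1)
      = (if c = b then x c * bondSpin ep S c else 1) * Real.exp ((x c)^2/2) := by
    intro c
    have hsq : (x c * bondSpin ep S c)^2 = (x c)^2 := by
      rw [mul_pow, bondSpin_sq, mul_one]
    by_cases hc : c = b
    · simp only [hc, if_pos rfl] at *
      rw [← hsq]
      exact m_id_exp _
    · simp only [hc, if_false, one_mul]
      rw [← hsq]
      exact m_exp _
  simp_rw [hval]
  rw [Finset.prod_mul_distrib, Finset.prod_ite_eq' Finset.univ b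
    (fun c => x c * bondSpin ep S c)]
  simp only [Finset.mem_univ, if_true]
  rw [← Real.exp_sum]

lemma key_A :
    ∫ j, j b * gibbs ep x j (fun S => bondSpin ep S b) ∂(couplings x) = x b := by
  set Q : (ι → ℝ) → ℝ := fun j => gibbs ep x j (fun S => bondSpin ep S b) with hQ
  have step0 : ∫ j, j b * Q j ∂(couplings x)
      = ∫ j, (∏ c, cmd (x c) (j c)) * (j b * Q j) ∂(nu ι) :=
    integral_couplings_density x _
  have stepτ : ∀ τ : V → Bool,
      ∫ j, (∏ c, cmd (x c) (j c)) * (j b * Q j) ∂(nu ι)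
      = ∫ j, (∏ c, cmd (bondSpin ep τ c * x c) (j c)) * (j b * Q j) ∂(nu ι) := by
    intro τ
    rw [integral_flip (ε := fun c => bondSpin ep τ c) (fun c => bondSpin_mul_self ep τ c)
      (measurable_bond_integrand ep x b x)]
    refine integral_congr_ae (ae_of_all _ fun j => ?_)
    simp only
    have hcmd : ∀ c : ι, cmd (x c) (bondSpin ep τ c * j c) = cmd (bondSpin ep τ c * x c) (j c) :=
      fun c => cmd_flip (bondSpin_mul_self ep τ c) (x c) (j c)
    simp_rw [hcmd, hQ]
    rw [gibbs_flip]
    have h := bondSpin_mul_self ep τ b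
    linear_combination ((∏ c, cmd (bondSpin ep τ c * x c) (j c)) * (j b *
      gibbs ep x j fun S => bondSpin ep S b)) * h
  have hcard : (0:ℝ) < (Fintype.card (V → Bool) : ℝ) := by
    have : 0 < Fintype.card (V → Bool) := Fintype.card_pos
    exact_mod_cast this
  set K : ℝ := ∑ c, (x c)^2/2 with hK
  have hsum : (Fintype.card (V → Bool) : ℝ) * (∫ j, (∏ c, cmd (x c) (j c)) * (j b * Q j) ∂(nu ι))
      = Real.exp (-K) * ((Fintype.card (V → Bool) : ℝ) * (x b * Real.exp K)) := by
    have h1 : (Fintype.card (V → Bool) : ℝ) *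
        (∫ j, (∏ c, cmd (x c) (j c)) * (j b * Q j) ∂(nu ι))
        = ∑ τ : V → Bool, ∫ j, (∏ c, cmd (bondSpin ep τ c * x c) (j c)) * (j b * Q j) ∂(nu ι) := by
      rw [Finset.sum_congr rfl fun τ _ => (stepτ τ).symm, Finset.sum_const, Finset.card_univ,
        nsmul_eq_mul]
    have h2 : ∑ τ : V → Bool, ∫ j, (∏ c, cmd (bondSpin ep τ c * x c) (j c)) * (j b * Q j) ∂(nu ι)
        = ∫ j, ∑ τ : V → Bool, (∏ c, cmd (bondSpin ep τ c * x c) (j c)) * (j b * Q j) ∂(nu ι) :=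
      (integral_finset_sum _ fun τ _ => integrable_bond_integrand ep x b _).symm
    have h3 : ∀ j : ι → ℝ, ∑ τ : V → Bool, (∏ c, cmd (bondSpin ep τ c * x c) (j c)) * (j b * Q j)
        = Real.exp (-K) * (j b * numer ep x b j) := by
      intro j
      rw [← Finset.sum_mul, sum_cmd_tau]
      simp only [hQ]
      rw [gibbs_bond_eq]
      have hZ := partitionFn_ne ep x j
      field_simp
      ring
    have h4 : ∫ j, Real.exp (-K) * (j b * numer ep x b j) ∂(nu ι)
        = Real.exp (-K) * ∫ j, j b * numer ep x b j ∂(nu ι) := integral_const_mul _ _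
    have h5 : ∫ j, j b * numer ep x b j ∂(nu ι)
        = (Fintype.card (V → Bool) : ℝ) * (x b * Real.exp K) := by
      have he : ∀ j : ι → ℝ, j b * numer ep x b j
          = ∑ S : V → Bool, bondSpin ep S b * (j b * Real.exp (potential ep x j S)) := by
        intro j
        rw [numer, Finset.mul_sum]
        exact Finset.sum_congr rfl fun S _ => by ring
      simp_rw [he]
      rw [integral_finset_sum _ fun S _ => (integrable_eval_exp ep x b S).const_mul _]
      have : ∀ S : V → Bool, ∫ j, bondSpin ep S b * (j b * Real.exp (potential ep x j S)) ∂(nu ι)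
          = x b * Real.exp K := by
        intro S
        rw [integral_const_mul, integral_eval_exp, ← hK]
        have h := bondSpin_mul_self ep S b
        linear_combination (x b * Real.exp K) * h
      simp_rw [this]
      rw [Finset.sum_const, Finset.card_univ, nsmul_eq_mul]
    rw [h1, h2]
    simp_rw [h3]
    rw [h4, h5]
  have hfinal : ∫ j, (∏ c, cmd (x c) (j c)) * (j b * Q j) ∂(nu ι) = x b := by
    have hexp : Real.exp (-K) * Real.exp K = 1 := by
      rw [← Real.exp_add, neg_add_cancel, Real.exp_zero]
    have h2 : (Fintype.card (V → Bool) : ℝ)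
        * (∫ j, (∏ c, cmd (x c) (j c)) * (j b * Q j) ∂(nu ι))
        = (Fintype.card (V → Bool) : ℝ) * x b := by
      rw [hsum]
      calc Real.exp (-K) * ((Fintype.card (V → Bool) : ℝ) * (x b * Real.exp K))
          = (Real.exp (-K) * Real.exp K) * ((Fintype.card (V → Bool) : ℝ) * x b) := by ring
        _ = (Fintype.card (V → Bool) : ℝ) * x b := by rw [hexp, one_mul]
    exact mul_left_cancel₀ hcard.ne' h2
  rw [step0, hfinal]

end Key

end NishimoriAux



namespace NishimoriAux

section Deriv
variable {V ι : Type*} [Fintype V] [DecidableEq V] [Fintype ι] [DecidableEq ι]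
variable (ep : ι → V × V) (x : ι → ℝ) (b : ι)

lemma continuous_shift (y : ι → ℝ) :
    Continuous fun g : ι → ℝ => (fun c => g c + y c) :=
  continuous_pi fun c => (continuous_apply c).add continuous_const

lemma pressure_eq (y : ι → ℝ) :
    pressure ep y = ∫ g, Real.log (partitionFn ep y (fun c => g c + y c)) ∂(nu ι) := by
  rw [pressure, quenched]
  exact integral_couplings y (continuous_log_partitionFn ep y).aestronglyMeasurable

lemma quenched_nonneg :
    0 ≤ quenched x (fun j => gibbs ep x j (fun S => bondSpin ep S b + 1)) := by
  refine integral_nonneg fun j => gibbs_nonneg ep x j fun S => ?_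
  have h := abs_bondSpin ep S b
  have h2 := neg_abs_le (bondSpin ep S b)
  rw [h] at h2
  linarith

lemma integrable_Q :
    Integrable (fun g : ι → ℝ =>
      gibbs ep x (fun c => g c + x c) (fun S => bondSpin ep S b)) (nu ι) := by
  refine (integrable_const (1:ℝ)).mono'
    (((continuous_gibbs ep x _).comp (continuous_shift x)).aestronglyMeasurable)
    (ae_of_all _ fun g => ?_)
  rw [Real.norm_eq_abs]
  exact abs_gibbs_le ep x _ fun S => le_of_eq (abs_bondSpin ep S b)

lemma deriv_value :
    ∫ g, (g b + 2 * x b) * gibbs ep x (fun c => g c + x c) (fun S => bondSpin ep S b) ∂(nu ι)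
      = x b * quenched x (fun j => gibbs ep x j (fun S => bondSpin ep S b + 1)) := by
  have hQm : AEStronglyMeasurable
      (fun j : ι → ℝ => gibbs ep x j (fun S => bondSpin ep S b)) (couplings x) :=
    (continuous_gibbs ep x _).aestronglyMeasurable
  -- rewrite RHS
  have hadd : (fun j : ι → ℝ => gibbs ep x j (fun S => bondSpin ep S b + 1))
      = fun j => gibbs ep x j (fun S => bondSpin ep S b) + 1 :=
    funext fun j => gibbs_add_one ep x j _
  have hRint : Integrable (fun j : ι → ℝ =>
      gibbs ep x j (fun S => bondSpin ep S b)) (couplings x) := by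
    refine (integrable_const (1:ℝ)).mono' hQm (ae_of_all _ fun j => ?_)
    rw [Real.norm_eq_abs]
    exact abs_gibbs_le ep x _ fun S => le_of_eq (abs_bondSpin ep S b)
  have hR : quenched x (fun j => gibbs ep x j (fun S => bondSpin ep S b + 1))
      = (∫ g, gibbs ep x (fun c => g c + x c) (fun S => bondSpin ep S b) ∂(nu ι)) + 1 := by
    rw [quenched, hadd, integral_add hRint (integrable_const 1), integral_const]
    simp only [probReal_univ, one_smul]
    congr 1
    exact integral_couplings x hQm
  -- split LHS
  have h1 : Integrable (fun g : ι → ℝ =>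
      (g b + x b) * gibbs ep x (fun c => g c + x c) (fun S => bondSpin ep S b)) (nu ι) := by
    refine ((int_abs_eval b).add (integrable_const |x b|)).mono'
      (((continuous_apply b).add continuous_const).mul
        ((continuous_gibbs ep x _).comp (continuous_shift x))).aestronglyMeasurable
      (ae_of_all _ fun g => ?_)
    rw [Real.norm_eq_abs, abs_mul]
    have hg : |gibbs ep x (fun c => g c + x c) fun S => bondSpin ep S b| ≤ 1 :=
      abs_gibbs_le ep x _ fun S => le_of_eq (abs_bondSpin ep S b)
    calc |g b + x b| * |gibbs ep x (fun c => g c + x c) fun S => bondSpin ep S b|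
        ≤ |g b + x b| * 1 := mul_le_mul_of_nonneg_left hg (abs_nonneg _)
      _ = |g b + x b| := mul_one _
      _ ≤ |g b| + |x b| := abs_add_le _ _
  have h2 : Integrable (fun g : ι → ℝ =>
      x b * gibbs ep x (fun c => g c + x c) (fun S => bondSpin ep S b)) (nu ι) :=
    (integrable_Q ep x b).const_mul _
  have hsplit : ∀ g : ι → ℝ,
      (g b + 2 * x b) * gibbs ep x (fun c => g c + x c) (fun S => bondSpin ep S b)
      = (g b + x b) * gibbs ep x (fun c => g c + x c) (fun S => bondSpin ep S b)
        + x b * gibbs ep x (fun c => g c + x c) (fun S => bondSpin ep S b) := fun g => by ring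
  simp_rw [hsplit]
  rw [integral_add h1 h2, integral_const_mul]
  -- first summand is the key identity
  have hAm : AEStronglyMeasurable
      (fun j : ι → ℝ => j b * gibbs ep x j (fun S => bondSpin ep S b)) (couplings x) :=
    ((continuous_apply b).mul (continuous_gibbs ep x _)).aestronglyMeasurable
  have hA : ∫ g, (g b + x b) * gibbs ep x (fun c => g c + x c)
        (fun S => bondSpin ep S b) ∂(nu ι)
      = ∫ j, j b * gibbs ep x j (fun S => bondSpin ep S b) ∂(couplings x) :=
    (integral_couplings x hAm).symm
  rw [hA, key_A ep x b, hR]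
  ring

/-- the function under the quenched integral, as a function of the parameter `s` -/
def Fa (s : ℝ) (g : ι → ℝ) : ℝ :=
  Real.log (partitionFn ep (Function.update x b s) (fun c => g c + Function.update x b s c))

/-- its `s`-derivative -/
def Fa' (s : ℝ) (g : ι → ℝ) : ℝ :=
  (g b + 2*s) * gibbs ep (Function.update x b s) (fun c => g c + Function.update x b s c)
    (fun S => bondSpin ep S b)

lemma key_deriv :
    HasDerivAt (fun s => pressure ep (Function.update x b s))
      (x b * quenched x (fun j => gibbs ep x j (fun S => bondSpin ep S b + 1))) (x b) := by
  set x₀ := x b with hx0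
  have hupd : Function.update x b x₀ = x := Function.update_eq_self b x
  have hF_meas : ∀ s : ℝ, AEStronglyMeasurable (Fa ep x b s) (nu ι) := fun s =>
    ((continuous_log_partitionFn ep _).comp (continuous_shift _)).aestronglyMeasurable
  have hF'_meas : AEStronglyMeasurable (Fa' ep x b x₀) (nu ι) := by
    refine Continuous.aestronglyMeasurable ?_
    exact ((continuous_apply b).add continuous_const).mul
      ((continuous_gibbs ep _ _).comp (continuous_shift _))
  have hF_int : Integrable (Fa ep x b x₀) (nu ι) := by
    have hmaj : Integrable (fun g : ι → ℝ =>
        (Fintype.card V * Real.log 2 + ∑ c, |x c| * |x c|) + ∑ c, |x c| * |g c|) (nu ι) := by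
      refine (integrable_const _).add ?_
      exact integrable_finset_sum _ fun c _ => (int_abs_eval c).const_mul _
    refine hmaj.mono' (hF_meas x₀) (ae_of_all _ fun g => ?_)
    rw [Real.norm_eq_abs]
    have h1 := abs_log_partitionFn_le ep x (fun c => g c + x c)
    have h2 : ∑ c, |x c * (g c + x c)| ≤ (∑ c, |x c| * |x c|) + ∑ c, |x c| * |g c| := by
      rw [← Finset.sum_add_distrib]
      refine Finset.sum_le_sum fun c _ => ?_
      rw [abs_mul]
      calc |x c| * |g c + x c| ≤ |x c| * (|g c| + |x c|) :=
            mul_le_mul_of_nonneg_left (abs_add_le _ _) (abs_nonneg _)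
        _ = |x c| * |x c| + |x c| * |g c| := by ring
    have h3 : Fa ep x b x₀ g = Real.log (partitionFn ep x (fun c => g c + x c)) := by
      rw [Fa, hupd]
    rw [h3]
    calc |Real.log (partitionFn ep x (fun c => g c + x c))|
        ≤ Fintype.card V * Real.log 2 + ∑ c, |x c * (g c + x c)| := h1
      _ ≤ (Fintype.card V * Real.log 2 + ∑ c, |x c| * |x c|) + ∑ c, |x c| * |g c| := by
          linarith
  have hbound_int : Integrable (fun g : ι → ℝ => |g b| + (2*|x b| + 2)) (nu ι) :=
    (int_abs_eval b).add (integrable_const _)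
  have h_bound : ∀ g : ι → ℝ, ∀ s ∈ Metric.ball x₀ 1,
      ‖Fa' ep x b s g‖ ≤ |g b| + (2*|x b| + 2) := by
    intro g s hs
    rw [Metric.mem_ball, Real.dist_eq] at hs
    have hsabs : |s| ≤ |x b| + 1 := by
      have h0 := abs_sub_abs_le_abs_sub s (x b)
      linarith
    rw [Real.norm_eq_abs, Fa', abs_mul]
    have hg : |gibbs ep (Function.update x b s) (fun c => g c + Function.update x b s c)
        fun S => bondSpin ep S b| ≤ 1 :=
      abs_gibbs_le ep _ _ fun S => le_of_eq (abs_bondSpin ep S b)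
    calc |g b + 2*s| * |gibbs ep (Function.update x b s)
          (fun c => g c + Function.update x b s c) fun S => bondSpin ep S b|
        ≤ |g b + 2*s| * 1 := mul_le_mul_of_nonneg_left hg (abs_nonneg _)
      _ = |g b + 2*s| := mul_one _
      _ ≤ |g b| + 2*|s| := by
          calc |g b + 2*s| ≤ |g b| + |2*s| := abs_add_le _ _
            _ = |g b| + 2*|s| := by rw [abs_mul]; norm_num
      _ ≤ |g b| + (2*|x b| + 2) := by linarith
  have h_diff : ∀ g : ι → ℝ, ∀ s ∈ Metric.ball x₀ 1,
      HasDerivAt (fun u => Fa ep x b u g) (Fa' ep x b s g) s := by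
    intro g s _
    have hpot : ∀ S : V → Bool, HasDerivAt
        (fun u => potential ep (Function.update x b u)
          (fun c => g c + Function.update x b u c) S)
        ((g b + 2*s) * bondSpin ep S b) s := by
      intro S
      have h : ∀ c ∈ Finset.univ, HasDerivAt
          (fun u : ℝ => Function.update x b u c * (g c + Function.update x b u c)
            * bondSpin ep S c)
          (if c = b then (g b + 2*s) * bondSpin ep S b else 0) s := by
        intro c _
        by_cases hc : c = b
        · subst hc
          simp only [Function.update_self, if_pos rfl]
          have h1 : HasDerivAt (fun u : ℝ => u * (g c + u)) (1 * (g c + s) + s * 1) s :=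
            (hasDerivAt_id s).mul ((hasDerivAt_id s).const_add (g c))
          have h2 := h1.mul_const (bondSpin ep S c)
          refine h2.congr_deriv ?_
          simp only [eq_self_iff_true, if_true]
          ring
        · simp only [Function.update_of_ne hc, if_neg hc]
          exact hasDerivAt_const s _
      have hsum := HasDerivAt.fun_sum h
      rw [Finset.sum_ite_eq' Finset.univ b _] at hsum
      simp only [Finset.mem_univ, if_true] at hsum
      exact hsum
    have hZ : HasDerivAt
        (fun u => partitionFn ep (Function.update x b u)
          (fun c => g c + Function.update x b u c))
        (∑ S : V → Bool, Real.exp (potential ep (Function.update x b s)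
          (fun c => g c + Function.update x b s c) S) * ((g b + 2*s) * bondSpin ep S b)) s :=
      HasDerivAt.fun_sum fun S _ => (hpot S).exp
    have hlog := hZ.log (partitionFn_ne ep _ _)
    have heq : (∑ S : V → Bool, Real.exp (potential ep (Function.update x b s)
          (fun c => g c + Function.update x b s c) S) * ((g b + 2*s) * bondSpin ep S b))
        / partitionFn ep (Function.update x b s) (fun c => g c + Function.update x b s c)
        = Fa' ep x b s g := by
      rw [Fa', gibbs, ← mul_div_assoc]
      congr 1
      rw [Finset.mul_sum]
      exact Finset.sum_congr rfl fun S _ => by ring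
    rw [heq] at hlog
    exact hlog
  have H := hasDerivAt_integral_of_dominated_loc_of_deriv_le (μ := nu ι)
    (F := Fa ep x b) (F' := Fa' ep x b) (x₀ := x₀)
    (bound := fun g => |g b| + (2*|x b| + 2)) (Metric.ball_mem_nhds x₀ one_pos)
    (Eventually.of_forall hF_meas) hF_int hF'_meas
    (ae_of_all _ h_bound) hbound_int (ae_of_all _ h_diff)
  obtain ⟨-, hH⟩ := H
  have heqF : (fun s => ∫ g, Fa ep x b s g ∂(nu ι))
      = fun s => pressure ep (Function.update x b s) :=
    funext fun s => (pressure_eq ep (Function.update x b s)).symm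
  rw [heqF] at hH
  have hval : ∫ g, Fa' ep x b x₀ g ∂(nu ι)
      = x b * quenched x (fun j => gibbs ep x j (fun S => bondSpin ep S b + 1)) := by
    have h : Fa' ep x b x₀ = fun g => (g b + 2 * x b) *
        gibbs ep x (fun c => g c + x c) (fun S => bondSpin ep S b) := by
      funext g
      rw [Fa', hupd, hx0]
    rw [h]
    exact deriv_value ep x b
  rwa [hval] at hH

end Deriv

end NishimoriAux

open NishimoriAux in
/-- First Griffiths-type inequality on the Nishimori line: the quenched
pressure is differentiable in each parameter `x_b` (total derivative: the parameter enters
both the Gaussian mean and the potential), with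
`dP/dx_b = x_b [⟨S_b + 1⟩] ≥ 0`; in particular `P` is nondecreasing in each `x_b`. -/
theorem griffiths_first_inequality
    {V ι : Type*} [Fintype V] [DecidableEq V] [Fintype ι] [DecidableEq ι]
    (ep : ι → V × V) (hep : ∀ b, (ep b).1 ≠ (ep b).2)
    (x : ι → ℝ) (hx : ∀ b, 0 ≤ x b) (b : ι) :
    HasDerivAt (fun s => pressure ep (Function.update x b s))
      (x b * quenched x (fun j => gibbs ep x j (fun S => bondSpin ep S b + 1))) (x b) ∧
    0 ≤ x b * quenched x (fun j => gibbs ep x j (fun S => bondSpin ep S b + 1)) ∧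
    MonotoneOn (fun s => pressure ep (Function.update x b s)) (Set.Ici (0 : ℝ)) := by
  refine ⟨key_deriv ep x b, mul_nonneg (hx b) (quenched_nonneg ep x b), ?_⟩
  have hD : ∀ s : ℝ, HasDerivAt (fun u => pressure ep (Function.update x b u))
      (s * quenched (Function.update x b s)
        (fun j => gibbs ep (Function.update x b s) j (fun S => bondSpin ep S b + 1))) s := by
    intro s
    have h := key_deriv ep (Function.update x b s) b
    simp only [Function.update_idem, Function.update_self] at h
    exact h
  refine monotoneOn_of_deriv_nonneg (convex_Ici 0) ?_ ?_ ?_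
  · exact (continuous_iff_continuousAt.mpr fun s => (hD s).continuousAt).continuousOn
  · intro s _
    exact (hD s).differentiableAt.differentiableWithinAt
  · intro s hs
    rw [interior_Ici] at hs
    rw [(hD s).deriv]
    exact mul_nonneg (le_of_lt hs) (quenched_nonneg ep (Function.update x b s) b)

end
end

section
/- Monotonicity of quenched correlations in the bond set: if B' ⊆ B are two bond sets on the same finite site set V, x > 0, and b ∈ B', then the quenched correlation computed with bond set B' is at most that computed with bond set B: [⟨S_b⟩]_{B'} ≤ [⟨S_b⟩]_B (all parameters equal to x). Consequently, since [⟨S_b⟩]_B ≤ 1 for every B, along any increasing sequence of bond sets the quenched correlations [⟨S_b⟩] converge. -/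
open MeasureTheory ProbabilityTheory Filter

noncomputable section

open scoped ENNReal NNReal

set_option linter.unusedSectionVars false
set_option linter.unusedVariables false
set_option maxHeartbeats 1000000

section aux

variable {V ι : Type*} [Fintype V] [DecidableEq V] [Fintype ι] [DecidableEq ι]

lemma spin_sq (s : Bool) : spin s * spin s = 1 := by cases s <;> simp [spin]

lemma spin_beq (s t : Bool) : spin (s == t) = spin s * spin t := by
  cases s <;> cases t <;> simp [spin]

lemma abs_spin (s : Bool) : |spin s| = 1 := by cases s <;> simp [spin]

/-- spin-flip (gauge transformation) of a configuration -/
def flipC (σ S : V → Bool) : V → Bool := fun n => σ n == S n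

lemma flipC_invol (σ : V → Bool) : Function.Involutive (flipC σ) := by
  intro S; funext n; unfold flipC; cases σ n <;> cases S n <;> rfl

lemma bondSpin_flipC (ep : ι → V × V) (σ S : V → Bool) (c : ι) :
    bondSpin ep (flipC σ S) c = bondSpin ep σ c * bondSpin ep S c := by
  unfold bondSpin flipC
  rw [spin_beq, spin_beq]; ring

lemma bondSpin_sq (ep : ι → V × V) (σ : V → Bool) (c : ι) :
    bondSpin ep σ c * bondSpin ep σ c = 1 := by
  unfold bondSpin
  rw [show ∀ a b : ℝ, a * b * (a * b) = a * a * (b * b) from fun a b => by ring,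
    spin_sq, spin_sq, one_mul]

lemma abs_bondSpin (ep : ι → V × V) (σ : V → Bool) (c : ι) : |bondSpin ep σ c| = 1 := by
  unfold bondSpin; rw [abs_mul, abs_spin, abs_spin, one_mul]

lemma partitionFn_pos (ep : ι → V × V) (y j : ι → ℝ) : 0 < partitionFn ep y j := by
  unfold partitionFn
  exact Finset.sum_pos (fun S _ => Real.exp_pos _) Finset.univ_nonempty

lemma abs_gibbs_le_one (ep : ι → V × V) (y j : ι → ℝ) {f : (V → Bool) → ℝ}
    (hf : ∀ S, |f S| ≤ 1) : |gibbs ep y j f| ≤ 1 := by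
  unfold gibbs
  rw [abs_div, abs_of_pos (partitionFn_pos ep y j),
    div_le_one (partitionFn_pos ep y j)]
  calc |∑ S : V → Bool, f S * Real.exp (potential ep y j S)|
      ≤ ∑ S : V → Bool, |f S * Real.exp (potential ep y j S)| :=
        Finset.abs_sum_le_sum_abs _ _
    _ ≤ ∑ S : V → Bool, Real.exp (potential ep y j S) := by
        refine Finset.sum_le_sum fun S _ => ?_
        rw [abs_mul, abs_of_pos (Real.exp_pos _)]
        exact mul_le_of_le_one_left (Real.exp_pos _).le (hf S)
    _ = partitionFn ep y j := rfl

lemma continuous_potential (ep : ι → V × V) (y : ι → ℝ) (S : V → Bool) :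
    Continuous fun j : ι → ℝ => potential ep y j S := by
  unfold potential
  exact continuous_finset_sum _ fun c _ =>
    (continuous_const.mul (continuous_apply c)).mul continuous_const

lemma continuous_gibbs (ep : ι → V × V) (y : ι → ℝ) (f : (V → Bool) → ℝ) :
    Continuous fun j : ι → ℝ => gibbs ep y j f := by
  unfold gibbs
  refine Continuous.div ?_ ?_ (fun j => (partitionFn_pos ep y j).ne')
  · exact continuous_finset_sum _ fun S _ =>
      continuous_const.mul (Real.continuous_exp.comp (continuous_potential ep y S))
  · exact continuous_finset_sum _ fun S _ =>
      Real.continuous_exp.comp (continuous_potential ep y S)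

lemma measurable_gibbs (ep : ι → V × V) (y : ι → ℝ) (f : (V → Bool) → ℝ) :
    Measurable fun j : ι → ℝ => gibbs ep y j f :=
  (continuous_gibbs ep y f).measurable

lemma potential_gauge (ep : ι → V × V) (y j : ι → ℝ) (σ S : V → Bool) :
    potential ep y (fun c => bondSpin ep σ c * j c) S = potential ep y j (flipC σ S) := by
  unfold potential
  refine Finset.sum_congr rfl fun c _ => ?_
  rw [bondSpin_flipC]; ring

lemma partitionFn_gauge (ep : ι → V × V) (y j : ι → ℝ) (σ : V → Bool) :
    partitionFn ep y (fun c => bondSpin ep σ c * j c) = partitionFn ep y j := by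
  unfold partitionFn
  simp_rw [potential_gauge]
  exact Fintype.sum_bijective (flipC σ) (flipC_invol σ).bijective _ _ (fun S => rfl)

lemma numer_gauge (ep : ι → V × V) (b : ι) (y j : ι → ℝ) (σ : V → Bool) :
    (∑ S : V → Bool, bondSpin ep S b *
        Real.exp (potential ep y (fun c => bondSpin ep σ c * j c) S))
      = bondSpin ep σ b * ∑ S : V → Bool, bondSpin ep S b * Real.exp (potential ep y j S) := by
  simp_rw [potential_gauge]
  rw [Finset.mul_sum]
  refine Fintype.sum_bijective (flipC σ) (flipC_invol σ).bijective _ _ (fun S => ?_)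
  rw [bondSpin_flipC]
  have h := bondSpin_sq ep σ b
  calc bondSpin ep S b * Real.exp (potential ep y j (flipC σ S))
      = (bondSpin ep σ b * bondSpin ep σ b) *
          (bondSpin ep S b * Real.exp (potential ep y j (flipC σ S))) := by rw [h, one_mul]
    _ = bondSpin ep σ b * (bondSpin ep σ b * bondSpin ep S b *
          Real.exp (potential ep y j (flipC σ S))) := by ring

lemma gibbs_gauge (ep : ι → V × V) (b : ι) (y j : ι → ℝ) (σ : V → Bool) :
    gibbs ep y (fun c => bondSpin ep σ c * j c) (fun S => bondSpin ep S b)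
      = bondSpin ep σ b * gibbs ep y j (fun S => bondSpin ep S b) := by
  unfold gibbs
  rw [numer_gauge, partitionFn_gauge, mul_div_assoc]


lemma bondSpin_one_or_neg_one (ep : ι → V × V) (σ : V → Bool) (c : ι) :
    bondSpin ep σ c = 1 ∨ bondSpin ep σ c = -1 := by
  unfold bondSpin spin
  cases σ (ep c).1 <;> cases σ (ep c).2 <;> norm_num

end aux

section meas

variable {ι : Type*} [Fintype ι]

theorem lintegral_pi_prod_fin {n : ℕ} (μ : Fin n → Measure ℝ) [∀ i, SigmaFinite (μ i)]
    (f : Fin n → ℝ → ℝ≥0∞) (hf : ∀ i, Measurable (f i)) :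
    ∫⁻ j, ∏ i, f i (j i) ∂Measure.pi μ = ∏ i, ∫⁻ t, f i t ∂μ i := by
  induction n with
  | zero =>
      simp only [Finset.univ_eq_empty, Finset.prod_empty]
      rw [lintegral_one, Measure.pi_univ]
      simp
  | succ n ih =>
      have mp := measurePreserving_piFinSuccAbove μ 0
      set e := MeasurableEquiv.piFinSuccAbove (fun _ : Fin (n+1) => ℝ) 0 with he
      have hej : ∀ j : Fin (n+1) → ℝ, e j = (j 0, fun i : Fin n => j i.succ) := by
        intro j
        rw [he, MeasurableEquiv.piFinSuccAbove_apply, Fin.insertNthEquiv_symm_apply]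
        refine Prod.ext rfl ?_
        funext i
        show j (Fin.succAbove 0 i) = j i.succ
        rw [Fin.zero_succAbove]
      have hF : Measurable fun z : ℝ × (Fin n → ℝ) =>
          f 0 z.1 * ∏ i : Fin n, f (Fin.succ i) (z.2 i) :=
        ((hf 0).comp measurable_fst).mul
          (Finset.measurable_prod _ fun i _ => (hf _).comp
            ((measurable_pi_apply i).comp measurable_snd))
      have hmeq : (Measure.pi fun i : Fin n => μ (Fin.succAbove 0 i))
          = Measure.pi fun i : Fin n => μ i.succ := by
        simp only [Fin.zero_succAbove]
      calc ∫⁻ j, ∏ i, f i (j i) ∂Measure.pi μ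
          = ∫⁻ j, f 0 ((e j).1) * ∏ i : Fin n, f (Fin.succ i) ((e j).2 i) ∂Measure.pi μ := by
            refine lintegral_congr fun j => ?_
            rw [Fin.prod_univ_succ]
            try rw [hej j]
        _ = ∫⁻ z : ℝ × (Fin n → ℝ), f 0 z.1 * ∏ i : Fin n, f (Fin.succ i) (z.2 i)
              ∂((μ 0).prod (Measure.pi fun i => μ (Fin.succAbove 0 i))) := mp.lintegral_comp hF
        _ = ∫⁻ z : ℝ × (Fin n → ℝ), f 0 z.1 * ∏ i : Fin n, f (Fin.succ i) (z.2 i)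
              ∂((μ 0).prod (Measure.pi fun i => μ i.succ)) := by rw [hmeq]
        _ = (∫⁻ t, f 0 t ∂μ 0) * ∫⁻ w : Fin n → ℝ, ∏ i : Fin n, f i.succ (w i)
              ∂Measure.pi (fun i => μ i.succ) :=
            lintegral_prod_mul (hf 0).aemeasurable
              (Finset.measurable_prod _ fun i _ =>
                (hf _).comp (measurable_pi_apply i)).aemeasurable
        _ = (∫⁻ t, f 0 t ∂μ 0) * ∏ i : Fin n, ∫⁻ t, f i.succ t ∂μ i.succ := by
            rw [ih (fun i => μ i.succ) (fun i => f i.succ) (fun i => hf _)]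
        _ = ∏ i, ∫⁻ t, f i t ∂μ i := (Fin.prod_univ_succ fun i => ∫⁻ t, f i t ∂μ i).symm

theorem lintegral_pi_prod (μ : ι → Measure ℝ) [∀ i, SigmaFinite (μ i)]
    (f : ι → ℝ → ℝ≥0∞) (hf : ∀ i, Measurable (f i)) :
    ∫⁻ j, ∏ i, f i (j i) ∂Measure.pi μ = ∏ i, ∫⁻ t, f i t ∂μ i := by
  classical
  let e := (Fintype.equivFin ι).symm
  have mp := measurePreserving_piCongrLeft μ e
  have hF : Measurable fun j : ι → ℝ => ∏ i, f i (j i) :=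
    Finset.measurable_prod _ fun i _ => (hf i).comp (measurable_pi_apply i)
  calc ∫⁻ j, ∏ i, f i (j i) ∂Measure.pi μ
      = ∫⁻ a, ∏ i, f i ((MeasurableEquiv.piCongrLeft (fun _ => ℝ) e) a i)
          ∂Measure.pi (fun i' => μ (e i')) := (mp.lintegral_comp hF).symm
    _ = ∫⁻ a, ∏ i', f (e i') (a i') ∂Measure.pi (fun i' => μ (e i')) := by
        refine lintegral_congr fun a => ?_
        rw [← e.prod_comp]
        refine Finset.prod_congr rfl fun i' _ => ?_
        congr 1
        rw [MeasurableEquiv.coe_piCongrLeft]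
        exact Equiv.piCongrLeft_apply_apply (fun _ => ℝ) e a i'
    _ = ∏ i', ∫⁻ t, f (e i') t ∂μ (e i') :=
        lintegral_pi_prod_fin _ _ (fun i' => hf _)
    _ = ∏ i, ∫⁻ t, f i t ∂μ i := e.prod_comp fun i => ∫⁻ t, f i t ∂μ i

lemma gaussian_density (m : ℝ) :
    gaussianReal m 1 = (gaussianReal 0 1).withDensity
      (fun t => ENNReal.ofReal (Real.exp (m * t - m ^ 2 / 2))) := by
  have hd : Measurable fun t : ℝ => ENNReal.ofReal (Real.exp (m * t - m ^ 2 / 2)) :=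
    (((measurable_id.const_mul m).sub measurable_const).exp).ennreal_ofReal
  rw [gaussianReal_of_var_ne_zero _ one_ne_zero, gaussianReal_of_var_ne_zero _ one_ne_zero,
    ← withDensity_mul _ (measurable_gaussianPDF 0 1) hd]
  congr 1
  funext t
  show gaussianPDF m 1 t
      = gaussianPDF 0 1 t * ENNReal.ofReal (Real.exp (m * t - m ^ 2 / 2))
  unfold gaussianPDF
  rw [← ENNReal.ofReal_mul (gaussianPDFReal_nonneg _ _ _)]
  congr 1
  unfold gaussianPDFReal
  simp only [NNReal.coe_one, mul_one]
  rw [mul_assoc, ← Real.exp_add]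
  congr 1
  ring

end meas

section meas2

variable {V ι : Type*} [Fintype V] [DecidableEq V] [Fintype ι] [DecidableEq ι]

instance couplings_prob (x : ι → ℝ) : IsProbabilityMeasure (couplings x) := by
  unfold couplings; infer_instance

lemma intg_of_bounded {m : ι → ℝ} {f : (ι → ℝ) → ℝ} (hf : Measurable f) {C : ℝ}
    (hC : ∀ j, |f j| ≤ C) : Integrable f (couplings m) :=
  ⟨hf.aestronglyMeasurable, HasFiniteIntegral.of_bounded (C := C)
    (Filter.Eventually.of_forall fun j => by simpa [Real.norm_eq_abs] using hC j)⟩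

lemma couplings_gauge (ep : ι → V × V) (σ : V → Bool) (y : ι → ℝ) :
    couplings (fun c => y c * bondSpin ep σ c)
      = (couplings y).map (fun j c => bondSpin ep σ c * j c) := by
  have hmeas : Measurable fun (j : ι → ℝ) c => bondSpin ep σ c * j c :=
    measurable_pi_lambda _ fun c => (measurable_pi_apply c).const_mul _
  unfold couplings
  refine Measure.pi_eq fun s hs => ?_
  rw [Measure.map_apply hmeas (MeasurableSet.univ_pi hs)]
  have hpre : (fun (j : ι → ℝ) c => bondSpin ep σ c * j c) ⁻¹' Set.univ.pi s
      = Set.univ.pi (fun c => (fun t => bondSpin ep σ c * t) ⁻¹' s c) := by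
    ext j
    simp [Set.mem_univ_pi]
  rw [hpre, Measure.pi_pi]
  refine Finset.prod_congr rfl fun c _ => ?_
  have hmap : (gaussianReal (y c) 1) ((fun t => bondSpin ep σ c * t) ⁻¹' s c)
      = ((gaussianReal (y c) 1).map (fun t => bondSpin ep σ c * t)) (s c) := by
    rw [Measure.map_apply (show Measurable fun t : ℝ => bondSpin ep σ c * t from
      (measurable_id.const_mul _)) (hs c)]
  rw [hmap]
  have h1 : (fun t => bondSpin ep σ c * t) = (bondSpin ep σ c * ·) := rfl
  rw [h1, gaussianReal_map_const_mul]
  have h2 : (⟨bondSpin ep σ c ^ 2, sq_nonneg _⟩ : ℝ≥0) * 1 = 1 := by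
    rcases bondSpin_one_or_neg_one ep σ c with h | h <;>
      · ext; simp [h]
  have hv : ∀ v : ℝ≥0, v = 1 → gaussianReal (bondSpin ep σ c * y c) v (s c)
      = gaussianReal (y c * bondSpin ep σ c) 1 (s c) := by
    rintro v rfl; rw [mul_comm]
  exact hv _ h2

lemma couplings_withDensity (m : ι → ℝ) :
    couplings m = (couplings 0).withDensity
      (fun j => ENNReal.ofReal (Real.exp (∑ c, (m c * j c - (m c) ^ 2 / 2)))) := by
  have hdc : ∀ c : ι, Measurable fun t : ℝ =>
      ENNReal.ofReal (Real.exp (m c * t - (m c) ^ 2 / 2)) := fun c =>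
    (((measurable_id.const_mul (m c)).sub measurable_const).exp).ennreal_ofReal
  have hprod : ∀ j : ι → ℝ, ENNReal.ofReal (Real.exp (∑ c, (m c * j c - (m c) ^ 2 / 2)))
      = ∏ c, ENNReal.ofReal (Real.exp (m c * j c - (m c) ^ 2 / 2)) := by
    intro j
    rw [Real.exp_sum, ENNReal.ofReal_prod_of_nonneg (fun c _ => (Real.exp_pos _).le)]
  unfold couplings
  refine Measure.pi_eq (μ := fun b => gaussianReal (m b) 1) fun s hs => ?_
  rw [withDensity_apply _ (MeasurableSet.univ_pi hs),
    ← lintegral_indicator (MeasurableSet.univ_pi hs)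
      (fun j => ENNReal.ofReal (Real.exp (∑ c, (m c * j c - (m c) ^ 2 / 2))))]
  have hind : ∀ j : ι → ℝ, (Set.univ.pi s).indicator
        (fun j => ENNReal.ofReal (Real.exp (∑ c, (m c * j c - (m c) ^ 2 / 2)))) j
      = ∏ c, (s c).indicator (fun t => ENNReal.ofReal (Real.exp (m c * t - (m c) ^ 2 / 2))) (j c) := by
    intro j
    by_cases hj : j ∈ Set.univ.pi s
    · rw [Set.indicator_of_mem hj, hprod]
      exact Finset.prod_congr rfl fun c _ =>
        (Set.indicator_of_mem (hj c (Set.mem_univ c))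
          (fun t => ENNReal.ofReal (Real.exp (m c * t - m c ^ 2 / 2)))).symm
    · rw [Set.indicator_of_notMem hj]
      symm
      rw [Set.mem_univ_pi] at hj
      push_neg at hj
      obtain ⟨c, hc⟩ := hj
      exact Finset.prod_eq_zero (Finset.mem_univ c) (Set.indicator_of_notMem hc _)
  calc ∫⁻ j, (Set.univ.pi s).indicator _ j ∂Measure.pi (fun _ : ι => gaussianReal 0 1)
      = ∫⁻ j, ∏ c, (s c).indicator
          (fun t => ENNReal.ofReal (Real.exp (m c * t - (m c) ^ 2 / 2))) (j c)
          ∂Measure.pi (fun _ : ι => gaussianReal 0 1) := lintegral_congr hind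
    _ = ∏ c, ∫⁻ t, (s c).indicator
          (fun t => ENNReal.ofReal (Real.exp (m c * t - (m c) ^ 2 / 2))) t ∂gaussianReal 0 1 :=
        lintegral_pi_prod _ _ (fun c => ((hdc c).indicator (hs c)))
    _ = ∏ c, gaussianReal (m c) 1 (s c) := by
        refine Finset.prod_congr rfl fun c _ => ?_
        rw [lintegral_indicator (hs c), ← withDensity_apply _ (hs c), ← gaussian_density]

lemma integral_couplings (m : ι → ℝ) (f : (ι → ℝ) → ℝ) :
    ∫ j, f j ∂couplings m
      = ∫ j, Real.exp (∑ c, (m c * j c - (m c) ^ 2 / 2)) * f j ∂couplings 0 := by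
  have hd : Measurable fun j : ι → ℝ => Real.exp (∑ c, (m c * j c - (m c) ^ 2 / 2)) :=
    (Finset.measurable_sum _ fun c _ =>
      by fun_prop).exp
  rw [couplings_withDensity m]
  have h1 : (fun j : ι → ℝ => ENNReal.ofReal (Real.exp (∑ c, (m c * j c - (m c) ^ 2 / 2))))
      = fun j => ((Real.toNNReal (Real.exp (∑ c, (m c * j c - (m c) ^ 2 / 2))) : ℝ≥0) : ℝ≥0∞) :=
    rfl
  rw [h1, integral_withDensity_eq_integral_smul₀ (hd.real_toNNReal).aemeasurable f]
  refine integral_congr_ae (Filter.Eventually.of_forall fun j => ?_)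
  simp only [NNReal.smul_def, smul_eq_mul]
  rw [Real.coe_toNNReal _ (Real.exp_pos _).le]

lemma integrable_weighted (m : ι → ℝ) {f : (ι → ℝ) → ℝ} (hf : Measurable f) {C : ℝ}
    (hC : ∀ j, |f j| ≤ C) :
    Integrable (fun j => Real.exp (∑ c, (m c * j c - (m c) ^ 2 / 2)) * f j) (couplings 0) := by
  have hd : Measurable fun j : ι → ℝ => Real.exp (∑ c, (m c * j c - (m c) ^ 2 / 2)) :=
    (Finset.measurable_sum _ fun c _ =>
      by fun_prop).exp
  have h0 : Integrable f (couplings m) := intg_of_bounded hf hC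
  rw [couplings_withDensity m] at h0
  have h1 : (fun j : ι → ℝ => ENNReal.ofReal (Real.exp (∑ c, (m c * j c - (m c) ^ 2 / 2))))
      = fun j => ((Real.toNNReal (Real.exp (∑ c, (m c * j c - (m c) ^ 2 / 2))) : ℝ≥0) : ℝ≥0∞) :=
    rfl
  rw [h1, integrable_withDensity_iff_integrable_smul₀ (hd.real_toNNReal).aemeasurable] at h0
  refine h0.congr (Filter.Eventually.of_forall fun j => ?_)
  simp only [NNReal.smul_def, smul_eq_mul]
  rw [Real.coe_toNNReal _ (Real.exp_pos _).le]

lemma indep_coords (B' : Finset ι) (m₁ m₂ : ι → ℝ) (hm : ∀ c ∈ B', m₁ c = m₂ c)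
    {h : (ι → ℝ) → ℝ} (hh : Measurable h)
    (hdep : ∀ j₁ j₂ : ι → ℝ, (∀ c ∈ B', j₁ c = j₂ c) → h j₁ = h j₂) :
    ∫ j, h j ∂couplings m₁ = ∫ j, h j ∂couplings m₂ := by
  classical
  have key : ∀ m : ι → ℝ, (∀ c ∈ B', m c = m₁ c) →
      ∫ j, h j ∂couplings m
        = ∫ a : (Subtype (fun c : ι => c ∈ B') → ℝ),
            h ((MeasurableEquiv.piEquivPiSubtypeProd (fun _ : ι => ℝ)
                (fun c : ι => c ∈ B')).symm (a, fun _ => 0))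
            ∂@Measure.pi _ _ (Subtype.fintype fun c : ι => c ∈ B') _
              (fun c => gaussianReal (m₁ c.1) 1) := by
    intro m hmm
    set e := MeasurableEquiv.piEquivPiSubtypeProd (fun _ : ι => ℝ) (fun c : ι => c ∈ B') with he
    have mp := measurePreserving_piEquivPiSubtypeProd
      (fun c : ι => gaussianReal (m c) 1) (fun c : ι => c ∈ B')
    have mps := MeasurePreserving.symm _ mp
    have hstep := mps.integral_comp (MeasurableEquiv.measurableEmbedding _) h
    unfold couplings
    rw [← hstep]
    have hfun : ∀ z : (Subtype (fun c : ι => c ∈ B') → ℝ) × ({c : ι // ¬ c ∈ B'} → ℝ),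
        h (e.symm z) = h (e.symm (z.1, fun _ => 0)) := by
      intro z
      refine hdep _ _ fun c hc => ?_
      have h1 : e.symm z c = z.1 ⟨c, hc⟩ := by
        show (Equiv.piEquivPiSubtypeProd (fun c : ι => c ∈ B') (fun _ : ι => ℝ)).symm z c = _
        rw [Equiv.piEquivPiSubtypeProd_symm_apply, dif_pos hc]
      have h2 : e.symm (z.1, fun _ => 0) c = z.1 ⟨c, hc⟩ := by
        show (Equiv.piEquivPiSubtypeProd (fun c : ι => c ∈ B') (fun _ : ι => ℝ)).symm _ c = _
        rw [Equiv.piEquivPiSubtypeProd_symm_apply, dif_pos hc]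
      rw [h1, h2]
    have hH : Measurable fun a : (Subtype (fun c : ι => c ∈ B') → ℝ) =>
        h (e.symm (a, fun _ => 0)) :=
      hh.comp (e.symm.measurable.comp (measurable_id.prodMk measurable_const))
    refine Eq.trans (integral_congr_ae (Filter.Eventually.of_forall hfun)) ?_
    refine Eq.trans ((integral_map measurable_fst.aemeasurable hH.aestronglyMeasurable).symm) ?_
    rw [Measure.map_fst_prod, measure_univ, one_smul]
    have hPm : (fun c : {c : ι // c ∈ B'} => gaussianReal (m c.1) 1)
        = fun c => gaussianReal (m₁ c.1) 1 := funext fun c => by rw [hmm c.1 c.2]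
    congr 1
    exact congrArg (fun μf : {c : ι // c ∈ B'} → Measure ℝ =>
      @Measure.pi _ _ (Subtype.fintype fun c : ι => c ∈ B') _ μf) hPm
  rw [key m₁ (fun c _ => rfl), key m₂ (fun c hc => (hm c hc).symm)]

end meas2

section main

variable {V ι : Type*} [Fintype V] [DecidableEq V] [Fintype ι] [DecidableEq ι]

lemma gauge_int (ep : ι → V × V) (b : ι) (y y'' : ι → ℝ) (σ : V → Bool) :
    ∫ j, bondSpin ep σ b * gibbs ep y'' j (fun S => bondSpin ep S b)
        ∂couplings (fun c => y c * bondSpin ep σ c)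
      = ∫ j, gibbs ep y'' j (fun S => bondSpin ep S b) ∂couplings y := by
  have hmeas : Measurable fun (j : ι → ℝ) c => bondSpin ep σ c * j c :=
    measurable_pi_lambda _ fun c => (measurable_pi_apply c).const_mul _
  rw [couplings_gauge ep σ y,
    integral_map hmeas.aemeasurable
      (((measurable_gibbs ep y'' _).const_mul (bondSpin ep σ b)).aestronglyMeasurable)]
  refine integral_congr_ae (Filter.Eventually.of_forall fun j => ?_)
  show bondSpin ep σ b * gibbs ep y'' (fun c => bondSpin ep σ c * j c) (fun S => bondSpin ep S b) = _
  rw [gibbs_gauge, ← mul_assoc, bondSpin_sq, one_mul]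

lemma dens_sigma (ep : ι → V × V) (y : ι → ℝ) (σ : V → Bool) (j : ι → ℝ) :
    (∑ c, ((y c * bondSpin ep σ c) * j c - (y c * bondSpin ep σ c) ^ 2 / 2))
      = potential ep y j σ - ∑ c, (y c) ^ 2 / 2 := by
  unfold potential
  rw [← Finset.sum_sub_distrib]
  refine Finset.sum_congr rfl fun c _ => ?_
  have h := bondSpin_sq ep σ c
  linear_combination (- (y c) ^ 2 / 2) * h

lemma bayes (ep : ι → V × V) (b : ι) (y : ι → ℝ) {g : (ι → ℝ) → ℝ}
    (hg : Measurable g) {C : ℝ} (hC : ∀ j, |g j| ≤ C) :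
    ∑ σ : V → Bool, ∫ j, (bondSpin ep σ b - gibbs ep y j (fun S => bondSpin ep S b)) * g j
        ∂couplings (fun c => y c * bondSpin ep σ c) = 0 := by
  have hC0 : 0 ≤ C := le_trans (abs_nonneg _) (hC (fun _ => 0))
  have hfb : ∀ S : V → Bool, |bondSpin ep S b| ≤ 1 := fun S => (abs_bondSpin ep S b).le
  have hφm := measurable_gibbs ep y (fun S => bondSpin ep S b)
  have hφb : ∀ j, |gibbs ep y j (fun S => bondSpin ep S b)| ≤ 1 :=
    fun j => abs_gibbs_le_one ep y j hfb
  have hintm : ∀ σ : V → Bool,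
      Measurable fun j => (bondSpin ep σ b - gibbs ep y j (fun S => bondSpin ep S b)) * g j :=
    fun σ => (measurable_const.sub hφm).mul hg
  have hintb : ∀ σ : V → Bool, ∀ j,
      |(bondSpin ep σ b - gibbs ep y j (fun S => bondSpin ep S b)) * g j| ≤ 2 * C := by
    intro σ j
    rw [abs_mul]
    refine mul_le_mul ?_ (hC j) (abs_nonneg _) (by norm_num)
    calc |bondSpin ep σ b - gibbs ep y j (fun S => bondSpin ep S b)|
        ≤ |bondSpin ep σ b| + |gibbs ep y j (fun S => bondSpin ep S b)| := abs_sub _ _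
      _ ≤ 2 := by
          have := hfb σ
          have := hφb j
          linarith
  have key : ∀ σ : V → Bool,
      ∫ j, (bondSpin ep σ b - gibbs ep y j (fun S => bondSpin ep S b)) * g j
          ∂couplings (fun c => y c * bondSpin ep σ c)
        = ∫ j, Real.exp (∑ c, ((y c * bondSpin ep σ c) * j c
              - (y c * bondSpin ep σ c) ^ 2 / 2))
            * ((bondSpin ep σ b - gibbs ep y j (fun S => bondSpin ep S b)) * g j)
            ∂couplings 0 :=
    fun σ => integral_couplings _ _
  have hsum0 : ∀ j : ι → ℝ,
      ∑ σ : V → Bool, (bondSpin ep σ b - gibbs ep y j (fun S => bondSpin ep S b))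
        * Real.exp (potential ep y j σ) = 0 := by
    intro j
    have hZ := (partitionFn_pos ep y j).ne'
    have hexp : ∑ σ : V → Bool, (bondSpin ep σ b - gibbs ep y j (fun S => bondSpin ep S b))
          * Real.exp (potential ep y j σ)
        = (∑ σ : V → Bool, bondSpin ep σ b * Real.exp (potential ep y j σ))
          - gibbs ep y j (fun S => bondSpin ep S b) * partitionFn ep y j := by
      simp_rw [sub_mul]
      rw [Finset.sum_sub_distrib, ← Finset.mul_sum]
      rfl
    rw [hexp]
    show _ - (∑ S : V → Bool, bondSpin ep S b * Real.exp (potential ep y j S))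
        / partitionFn ep y j * partitionFn ep y j = 0
    rw [div_mul_cancel₀ _ hZ, sub_self]
  calc ∑ σ : V → Bool, ∫ j, (bondSpin ep σ b - gibbs ep y j (fun S => bondSpin ep S b)) * g j
          ∂couplings (fun c => y c * bondSpin ep σ c)
      = ∑ σ : V → Bool, ∫ j, Real.exp (∑ c, ((y c * bondSpin ep σ c) * j c
            - (y c * bondSpin ep σ c) ^ 2 / 2))
          * ((bondSpin ep σ b - gibbs ep y j (fun S => bondSpin ep S b)) * g j)
          ∂couplings 0 := Finset.sum_congr rfl fun σ _ => key σ
    _ = ∫ j, ∑ σ : V → Bool, Real.exp (∑ c, ((y c * bondSpin ep σ c) * j c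
            - (y c * bondSpin ep σ c) ^ 2 / 2))
          * ((bondSpin ep σ b - gibbs ep y j (fun S => bondSpin ep S b)) * g j)
          ∂couplings 0 :=
        (integral_finset_sum _ fun σ _ =>
          integrable_weighted _ (hintm σ) (hintb σ)).symm
    _ = ∫ j, (0 : ℝ) ∂couplings 0 := by
        refine integral_congr_ae (Filter.Eventually.of_forall fun j => ?_)
        calc ∑ σ : V → Bool, Real.exp (∑ c, ((y c * bondSpin ep σ c) * j c
                - (y c * bondSpin ep σ c) ^ 2 / 2))
              * ((bondSpin ep σ b - gibbs ep y j (fun S => bondSpin ep S b)) * g j)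
            = (∑ σ : V → Bool, (bondSpin ep σ b - gibbs ep y j (fun S => bondSpin ep S b))
                * Real.exp (potential ep y j σ))
              * (g j * Real.exp (-(∑ c, (y c) ^ 2 / 2))) := by
              rw [Finset.sum_mul]
              refine Finset.sum_congr rfl fun σ _ => ?_
              rw [dens_sigma ep y σ j, sub_eq_add_neg, Real.exp_add]
              ring
          _ = 0 := by rw [hsum0 j, zero_mul]
    _ = 0 := integral_zero _ _

lemma potential_vec_indep (ep : ι → V × V) (x : ℝ) (B' : Finset ι) (j₁ j₂ : ι → ℝ)
    (hj : ∀ c ∈ B', j₁ c = j₂ c) (S : V → Bool) :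
    potential ep (fun c => if c ∈ B' then x else 0) j₁ S
      = potential ep (fun c => if c ∈ B' then x else 0) j₂ S := by
  unfold potential
  refine Finset.sum_congr rfl fun c _ => ?_
  by_cases hc : c ∈ B'
  · rw [hj c hc]
  · simp [hc]

lemma gibbs_vec_indep (ep : ι → V × V) (x : ℝ) (B' : Finset ι) (f : (V → Bool) → ℝ)
    (j₁ j₂ : ι → ℝ) (hj : ∀ c ∈ B', j₁ c = j₂ c) :
    gibbs ep (fun c => if c ∈ B' then x else 0) j₁ f
      = gibbs ep (fun c => if c ∈ B' then x else 0) j₂ f := by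
  unfold gibbs partitionFn
  have hp : ∀ S : V → Bool, potential ep (fun c => if c ∈ B' then x else 0) j₁ S
      = potential ep (fun c => if c ∈ B' then x else 0) j₂ S :=
    potential_vec_indep ep x B' j₁ j₂ hj
  simp only [hp]

lemma quenched_le_one (ep : ι → V × V) (b : ι) (y : ι → ℝ) :
    quenched y (fun j => gibbs ep y j (fun S => bondSpin ep S b)) ≤ 1 := by
  have hfb : ∀ S : V → Bool, |bondSpin ep S b| ≤ 1 := fun S => (abs_bondSpin ep S b).le
  unfold quenched
  calc ∫ j, gibbs ep y j (fun S => bondSpin ep S b) ∂couplings y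
      ≤ ∫ _j, (1 : ℝ) ∂couplings y :=
        integral_mono
          (intg_of_bounded (measurable_gibbs ep y _) (fun j => abs_gibbs_le_one ep y j hfb))
          (integrable_const 1)
          (fun j => (abs_le.mp (abs_gibbs_le_one ep y j hfb)).2)
    _ = 1 := by simp

lemma mono_bonds (ep : ι → V × V) (b : ι) (x : ℝ) (B' B : Finset ι) (hBB : B' ⊆ B) :
    quenched (fun c => if c ∈ B' then x else 0)
        (fun j => gibbs ep (fun c => if c ∈ B' then x else 0) j
          (fun S => bondSpin ep S b)) ≤
      quenched (fun c => if c ∈ B then x else 0)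
        (fun j => gibbs ep (fun c => if c ∈ B then x else 0) j
          (fun S => bondSpin ep S b)) := by
  set y' : ι → ℝ := fun c => if c ∈ B' then x else 0 with hy'
  set y : ι → ℝ := fun c => if c ∈ B then x else 0 with hy
  set φ : (ι → ℝ) → ℝ := fun j => gibbs ep y j (fun S => bondSpin ep S b) with hφ
  set φ' : (ι → ℝ) → ℝ := fun j => gibbs ep y' j (fun S => bondSpin ep S b) with hφ'
  have hfb : ∀ S : V → Bool, |bondSpin ep S b| ≤ 1 := fun S => (abs_bondSpin ep S b).le
  have hφm : Measurable φ := measurable_gibbs ep y _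
  have hφ'm : Measurable φ' := measurable_gibbs ep y' _
  have hφb : ∀ j, |φ j| ≤ 1 := fun j => abs_gibbs_le_one ep y j hfb
  have hφ'b : ∀ j, |φ' j| ≤ 1 := fun j => abs_gibbs_le_one ep y' j hfb
  have hyy' : ∀ c ∈ B', y c = y' c := fun c hc => by
    simp only [hy, hy']
    rw [if_pos hc, if_pos (hBB hc)]
  have hdepφ' : ∀ j₁ j₂ : ι → ℝ, (∀ c ∈ B', j₁ c = j₂ c) → φ' j₁ = φ' j₂ :=
    fun j₁ j₂ hj => gibbs_vec_indep ep x B' _ j₁ j₂ hj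
  have hmul_le_one : ∀ (u v : (ι → ℝ) → ℝ), (∀ j, |u j| ≤ 1) → (∀ j, |v j| ≤ 1) →
      ∀ j, |u j * v j| ≤ 1 := fun u v hu hv j => by
    rw [abs_mul]
    exact mul_le_one₀ (hu j) (abs_nonneg _) (hv j)
  set N : ℝ := (Fintype.card (V → Bool) : ℝ) with hN
  have hNpos : 0 < N := by
    rw [hN]
    exact_mod_cast Fintype.card_pos
  set Q : ℝ := ∫ j, φ j ∂couplings y with hQ
  set Q' : ℝ := ∫ j, φ' j ∂couplings y' with hQ'
  -- φ' has the same mean under couplings y and couplings y'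
  have hQ'' : ∫ j, φ' j ∂couplings y = Q' := by
    rw [hQ']
    exact indep_coords B' y y' hyy' hφ'm hdepφ'
  have hsumconst : ∀ r : ℝ, ∑ _σ : V → Bool, r = N * r := by
    intro r
    rw [Finset.sum_const, Finset.card_univ, nsmul_eq_mul, hN]
  -- the five summed quantities
  set E : ℝ := ∑ σ : V → Bool, ∫ j, bondSpin ep σ b * φ j
    ∂couplings (fun c => y c * bondSpin ep σ c) with hE
  set F : ℝ := ∑ σ : V → Bool, ∫ j, bondSpin ep σ b * φ' j
    ∂couplings (fun c => y c * bondSpin ep σ c) with hF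
  set A : ℝ := ∑ σ : V → Bool, ∫ j, φ j * φ j
    ∂couplings (fun c => y c * bondSpin ep σ c) with hA
  set Cc : ℝ := ∑ σ : V → Bool, ∫ j, φ j * φ' j
    ∂couplings (fun c => y c * bondSpin ep σ c) with hCc
  set D : ℝ := ∑ σ : V → Bool, ∫ j, φ' j * φ' j
    ∂couplings (fun c => y c * bondSpin ep σ c) with hD
  set D' : ℝ := ∑ σ : V → Bool, ∫ j, φ' j * φ' j
    ∂couplings (fun c => y' c * bondSpin ep σ c) with hD'
  set F' : ℝ := ∑ σ : V → Bool, ∫ j, bondSpin ep σ b * φ' j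
    ∂couplings (fun c => y' c * bondSpin ep σ c) with hF'
  -- gauge identities
  have hEQ : E = N * Q := by
    rw [hE, Finset.sum_congr rfl fun σ _ => gauge_int ep b y y σ, hsumconst]
  have hFQ : F = N * Q' := by
    rw [hF, Finset.sum_congr rfl fun σ _ => gauge_int ep b y y' σ, hsumconst, hQ'']
  have hF'Q : F' = N * Q' := by
    rw [hF', Finset.sum_congr rfl fun σ _ => gauge_int ep b y' y' σ, hsumconst, hQ']
  -- independence: D = D'
  have hDD' : D = D' := by
    rw [hD, hD']
    refine Finset.sum_congr rfl fun σ _ => ?_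
    refine indep_coords B' _ _ (fun c hc => by rw [hyy' c hc]) (hφ'm.mul hφ'm) ?_
    intro j₁ j₂ hj
    rw [hdepφ' j₁ j₂ hj]
  -- integrability helpers
  have Ii : ∀ (m : ι → ℝ) (u v : (ι → ℝ) → ℝ), Measurable u → Measurable v →
      (∀ j, |u j| ≤ 1) → (∀ j, |v j| ≤ 1) →
      Integrable (fun j => u j * v j) (couplings m) := fun m u v hu hv hub hvb =>
    intg_of_bounded (hu.mul hv) (hmul_le_one u v hub hvb)
  -- Bayes identity 1 : E - F - (A - Cc) = 0
  have hbayes1 : E - F - (A - Cc) = 0 := by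
    have h0 := bayes ep b y (g := fun j => φ j - φ' j) (hg := hφm.sub hφ'm) (C := 2) (fun j => by
      calc |φ j - φ' j| ≤ |φ j| + |φ' j| := abs_sub _ _
        _ ≤ 2 := by have := hφb j; have := hφ'b j; linarith)
    have hexp : ∀ σ : V → Bool,
        ∫ j, (bondSpin ep σ b - φ j) * (φ j - φ' j)
            ∂couplings (fun c => y c * bondSpin ep σ c)
          = (∫ j, bondSpin ep σ b * φ j ∂couplings (fun c => y c * bondSpin ep σ c))
            - (∫ j, bondSpin ep σ b * φ' j ∂couplings (fun c => y c * bondSpin ep σ c))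
            - ((∫ j, φ j * φ j ∂couplings (fun c => y c * bondSpin ep σ c))
              - (∫ j, φ j * φ' j ∂couplings (fun c => y c * bondSpin ep σ c))) := by
      intro σ
      have i1 : Integrable (fun j => bondSpin ep σ b * φ j)
          (couplings (fun c => y c * bondSpin ep σ c)) := Ii _ (fun _ => bondSpin ep σ b) φ
        measurable_const hφm (fun j => (abs_bondSpin ep σ b).le) hφb
      have i2 : Integrable (fun j => bondSpin ep σ b * φ' j)
          (couplings (fun c => y c * bondSpin ep σ c)) := Ii _ (fun _ => bondSpin ep σ b) φ'
        measurable_const hφ'm (fun j => (abs_bondSpin ep σ b).le) hφ'b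
      have i3 : Integrable (fun j => φ j * φ j)
          (couplings (fun c => y c * bondSpin ep σ c)) := Ii _ φ φ hφm hφm hφb hφb
      have i4 : Integrable (fun j => φ j * φ' j)
          (couplings (fun c => y c * bondSpin ep σ c)) := Ii _ φ φ' hφm hφ'm hφb hφ'b
      have i12 : Integrable (fun j => bondSpin ep σ b * φ j - bondSpin ep σ b * φ' j)
          (couplings (fun c => y c * bondSpin ep σ c)) := i1.sub i2
      have i34 : Integrable (fun j => φ j * φ j - φ j * φ' j)
          (couplings (fun c => y c * bondSpin ep σ c)) := i3.sub i4
      rw [show ∫ j, (bondSpin ep σ b - φ j) * (φ j - φ' j)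
            ∂couplings (fun c => y c * bondSpin ep σ c)
          = ∫ j, (bondSpin ep σ b * φ j - bondSpin ep σ b * φ' j) - (φ j * φ j - φ j * φ' j)
            ∂couplings (fun c => y c * bondSpin ep σ c) from
        integral_congr_ae (Filter.Eventually.of_forall fun j => by ring),
        integral_sub i12 i34, integral_sub i1 i2, integral_sub i3 i4]
    rw [Finset.sum_congr rfl fun σ _ => hexp σ] at h0
    rw [Finset.sum_sub_distrib, Finset.sum_sub_distrib, Finset.sum_sub_distrib] at h0
    rw [hE, hF, hA, hCc]
    exact h0
  -- Bayes identity 2 : F - Cc = 0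
  have hbayes2 : F - Cc = 0 := by
    have h0 := bayes ep b y (hg := hφ'm) (C := 1) hφ'b
    have hexp : ∀ σ : V → Bool,
        ∫ j, (bondSpin ep σ b - φ j) * φ' j ∂couplings (fun c => y c * bondSpin ep σ c)
          = (∫ j, bondSpin ep σ b * φ' j ∂couplings (fun c => y c * bondSpin ep σ c))
            - (∫ j, φ j * φ' j ∂couplings (fun c => y c * bondSpin ep σ c)) := by
      intro σ
      have i2 : Integrable (fun j => bondSpin ep σ b * φ' j)
          (couplings (fun c => y c * bondSpin ep σ c)) := Ii _ (fun _ => bondSpin ep σ b) φ'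
        measurable_const hφ'm (fun j => (abs_bondSpin ep σ b).le) hφ'b
      have i4 : Integrable (fun j => φ j * φ' j)
          (couplings (fun c => y c * bondSpin ep σ c)) := Ii _ φ φ' hφm hφ'm hφb hφ'b
      rw [show ∫ j, (bondSpin ep σ b - φ j) * φ' j ∂couplings (fun c => y c * bondSpin ep σ c)
          = ∫ j, bondSpin ep σ b * φ' j - φ j * φ' j
            ∂couplings (fun c => y c * bondSpin ep σ c) from
        integral_congr_ae (Filter.Eventually.of_forall fun j => by ring),
        integral_sub i2 i4]
    rw [Finset.sum_congr rfl fun σ _ => hexp σ, Finset.sum_sub_distrib] at h0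
    rw [hF, hCc]
    exact h0
  -- Bayes identity 3 (primed model) : F' - D' = 0
  have hbayes3 : F' - D' = 0 := by
    have h0 := bayes ep b y' (hg := hφ'm) (C := 1) hφ'b
    have hexp : ∀ σ : V → Bool,
        ∫ j, (bondSpin ep σ b - φ' j) * φ' j ∂couplings (fun c => y' c * bondSpin ep σ c)
          = (∫ j, bondSpin ep σ b * φ' j ∂couplings (fun c => y' c * bondSpin ep σ c))
            - (∫ j, φ' j * φ' j ∂couplings (fun c => y' c * bondSpin ep σ c)) := by
      intro σ
      have i2 : Integrable (fun j => bondSpin ep σ b * φ' j)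
          (couplings (fun c => y' c * bondSpin ep σ c)) := Ii _ (fun _ => bondSpin ep σ b) φ'
        measurable_const hφ'm (fun j => (abs_bondSpin ep σ b).le) hφ'b
      have i4 : Integrable (fun j => φ' j * φ' j)
          (couplings (fun c => y' c * bondSpin ep σ c)) := Ii _ φ' φ' hφ'm hφ'm hφ'b hφ'b
      rw [show ∫ j, (bondSpin ep σ b - φ' j) * φ' j ∂couplings (fun c => y' c * bondSpin ep σ c)
          = ∫ j, bondSpin ep σ b * φ' j - φ' j * φ' j
            ∂couplings (fun c => y' c * bondSpin ep σ c) from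
        integral_congr_ae (Filter.Eventually.of_forall fun j => by ring),
        integral_sub i2 i4]
    rw [Finset.sum_congr rfl fun σ _ => hexp σ, Finset.sum_sub_distrib] at h0
    rw [hF', hD']
    exact h0
  -- positivity : 0 ≤ A - Cc - (Cc - D)
  have hpos : 0 ≤ A - Cc - (Cc - D) := by
    have hnn : 0 ≤ ∑ σ : V → Bool, ∫ j, (φ j - φ' j) * (φ j - φ' j)
        ∂couplings (fun c => y c * bondSpin ep σ c) :=
      Finset.sum_nonneg fun σ _ => integral_nonneg fun j => mul_self_nonneg _
    have hexp : ∀ σ : V → Bool,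
        ∫ j, (φ j - φ' j) * (φ j - φ' j) ∂couplings (fun c => y c * bondSpin ep σ c)
          = ((∫ j, φ j * φ j ∂couplings (fun c => y c * bondSpin ep σ c))
            - (∫ j, φ j * φ' j ∂couplings (fun c => y c * bondSpin ep σ c)))
            - ((∫ j, φ j * φ' j ∂couplings (fun c => y c * bondSpin ep σ c))
              - (∫ j, φ' j * φ' j ∂couplings (fun c => y c * bondSpin ep σ c))) := by
      intro σ
      have i3 : Integrable (fun j => φ j * φ j)
          (couplings (fun c => y c * bondSpin ep σ c)) := Ii _ φ φ hφm hφm hφb hφb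
      have i4 : Integrable (fun j => φ j * φ' j)
          (couplings (fun c => y c * bondSpin ep σ c)) := Ii _ φ φ' hφm hφ'm hφb hφ'b
      have i5 : Integrable (fun j => φ' j * φ' j)
          (couplings (fun c => y c * bondSpin ep σ c)) := Ii _ φ' φ' hφ'm hφ'm hφ'b hφ'b
      have i34 : Integrable (fun j => φ j * φ j - φ j * φ' j)
          (couplings (fun c => y c * bondSpin ep σ c)) := i3.sub i4
      have i45 : Integrable (fun j => φ j * φ' j - φ' j * φ' j)
          (couplings (fun c => y c * bondSpin ep σ c)) := i4.sub i5
      rw [show ∫ j, (φ j - φ' j) * (φ j - φ' j) ∂couplings (fun c => y c * bondSpin ep σ c)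
          = ∫ j, (φ j * φ j - φ j * φ' j) - (φ j * φ' j - φ' j * φ' j)
            ∂couplings (fun c => y c * bondSpin ep σ c) from
        integral_congr_ae (Filter.Eventually.of_forall fun j => by ring),
        integral_sub i34 i45, integral_sub i3 i4, integral_sub i4 i5]
    rw [Finset.sum_congr rfl fun σ _ => hexp σ, Finset.sum_sub_distrib,
      Finset.sum_sub_distrib, Finset.sum_sub_distrib, ← hA, ← hCc, ← hD] at hnn
    exact hnn
  -- combine
  have hfinal : Q' ≤ Q := by
    have h1 : A = N * Q := by
      have := hbayes1
      have := hbayes2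
      nlinarith [hEQ, hFQ]
    have h2 : Cc = N * Q' := by nlinarith [hbayes2, hFQ]
    have h3 : D = N * Q' := by nlinarith [hbayes3, hF'Q, hDD']
    nlinarith [hpos, hNpos]
  show quenched y' φ' ≤ quenched y φ
  exact hfinal

end main

/-- Monotonicity of quenched correlations in the bond set: if `B' ⊆ B`
and `b ∈ B'` then `[⟨S_b⟩]_{B'} ≤ [⟨S_b⟩]_B` (all parameters equal to `x > 0`, correlation
for bond set `B''` computed with `x_c = 0` for `c ∉ B''`). Moreover `[⟨S_b⟩]_{B''} ≤ 1` for
every bond set `B''`, and consequently along any increasing sequence of bond sets the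
quenched correlations `[⟨S_b⟩]` converge. -/
theorem correlation_monotone_in_bonds
    {V ι : Type*} [Fintype V] [DecidableEq V] [Fintype ι] [DecidableEq ι]
    (ep : ι → V × V) (hep : ∀ b, (ep b).1 ≠ (ep b).2)
    (B' B : Finset ι) (hBB : B' ⊆ B) (x : ℝ) (hx : 0 < x) (b : ι) (hb : b ∈ B') :
    quenched (fun c => if c ∈ B' then x else 0)
        (fun j => gibbs ep (fun c => if c ∈ B' then x else 0) j
          (fun S => bondSpin ep S b)) ≤
      quenched (fun c => if c ∈ B then x else 0)
        (fun j => gibbs ep (fun c => if c ∈ B then x else 0) j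
          (fun S => bondSpin ep S b)) ∧
    (∀ B'' : Finset ι,
      quenched (fun c => if c ∈ B'' then x else 0)
        (fun j => gibbs ep (fun c => if c ∈ B'' then x else 0) j
          (fun S => bondSpin ep S b)) ≤ 1) ∧
    ∀ Bseq : ℕ → Finset ι, Monotone Bseq → ∃ l : ℝ,
      Filter.Tendsto (fun n =>
        quenched (fun c => if c ∈ Bseq n then x else 0)
          (fun j => gibbs ep (fun c => if c ∈ Bseq n then x else 0) j
            (fun S => bondSpin ep S b))) Filter.atTop (nhds l) := by
  classical
  refine ⟨mono_bonds ep b x B' B hBB, fun B'' => quenched_le_one ep b _, fun Bseq hMon => ?_⟩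
  set q : ℕ → ℝ := fun n =>
    quenched (fun c => if c ∈ Bseq n then x else 0)
      (fun j => gibbs ep (fun c => if c ∈ Bseq n then x else 0) j
        (fun S => bondSpin ep S b)) with hq
  have hqmono : Monotone q := fun n m hnm =>
    mono_bonds ep b x (Bseq n) (Bseq m) (hMon hnm)
  have hqbdd : BddAbove (Set.range q) := by
    refine ⟨1, fun r hr => ?_⟩
    obtain ⟨n, rfl⟩ := hr
    exact quenched_le_one ep b _
  exact ⟨⨆ n, q n, tendsto_atTop_ciSup hqmono hqbdd⟩


end
end
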